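/- arXiv:1507.00334 — 7 statements merged into one kernel-verified Lean document; each statement's English description precedes it below -/
import Mathlib

section
/- Let G be a group, H a subgroup of G, and M a subset of G that is a sharply transitive section for H, i.e., for all a, b ∈ G there is exactly one m ∈ M with m·aH = bH. Then for every g ∈ G and every x ∈ G, the left coset x·(g⁻¹Hg) of the conjugate subgroup g⁻¹Hg contains at most one element of M. -/
/-- If `M ⊆ G` is a sharply transitive section for the subgroup `H`,
then for every `g, x ∈ G` the left coset `x·(g⁻¹Hg)` of the conjugate subgroup
`g⁻¹Hg` contains at most one element of `M`. -/
theorem stmt2 (G : Type*) [Group G] (H : Subgroup G) (M : Set G)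
    (hM : ∀ a b : G, ∃! m : G, m ∈ M ∧
      (QuotientGroup.mk (m * a) : G ⧸ H) = (QuotientGroup.mk b : G ⧸ H)) :
    ∀ g x m₁ m₂ : G, m₁ ∈ M → m₂ ∈ M →
      (∃ h ∈ H, m₁ = x * (g⁻¹ * h * g)) → (∃ h ∈ H, m₂ = x * (g⁻¹ * h * g)) →
      m₁ = m₂ := by
  intro g x m₁ m₂ hm₁ hm₂ ⟨h₁, hh₁, e₁⟩ ⟨h₂, hh₂, e₂⟩
  obtain ⟨m, _, hu⟩ := hM g⁻¹ (x * g⁻¹)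
  have key : ∀ (mm : G) (h : G), h ∈ H → mm = x * (g⁻¹ * h * g) →
      (QuotientGroup.mk (mm * g⁻¹) : G ⧸ H) = QuotientGroup.mk (x * g⁻¹) := by
    intro mm h hh e
    subst e
    have eq : (x * (g⁻¹ * h * g) * g⁻¹)⁻¹ * (x * g⁻¹) = h⁻¹ := by group
    rw [QuotientGroup.eq, eq]
    exact inv_mem hh
  have u1 := hu m₁ ⟨hm₁, key m₁ h₁ hh₁ e₁⟩
  have u2 := hu m₂ ⟨hm₂, key m₂ h₂ hh₂ e₂⟩
  rw [u1, u2]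
end

section
/- Let h = span_ℝ{U, iT, iK} ⊆ sl₂(ℂ). If m is a real linear subspace of sl₂(ℂ) with sl₂(ℂ) = h ⊕ m as real vector spaces and [h, m] ⊆ m, then there exists a ∈ ℝ such that m = span_ℝ{T + a·iT, iU − a·U, K + a·iK}. -/
namespace Stmt9

abbrev M2C := Matrix (Fin 2) (Fin 2) ℂ

def K : M2C := !![1, 0; 0, -1]
def T : M2C := !![0, 1; 1, 0]
def U : M2C := !![0, 1; -1, 0]

/-- `sl₂(ℂ)` as a 6-dimensional real Lie algebra: the real span of
`K, T, U, iK, iT, iU` inside the 2×2 complex matrices (commutator bracket). -/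
noncomputable def sl2c : Submodule ℝ M2C :=
  Submodule.span ℝ {K, T, U, Complex.I • K, Complex.I • T, Complex.I • U}

/-- `h = span_ℝ{U, iT, iK}`. -/
noncomputable def hsu : Submodule ℝ M2C :=
  Submodule.span ℝ {U, Complex.I • T, Complex.I • K}

/-- `m_a = span_ℝ{T + a·iT, iU − a·U, K + a·iK}`. -/
noncomputable def ma (a : ℝ) : Submodule ℝ M2C :=
  Submodule.span ℝ
    {T + a • Complex.I • T, Complex.I • U - a • U, K + a • Complex.I • K}

lemma mem_hsu {x : M2C} (hx : x ∈ hsu) :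
    ∃ u t k : ℝ, x = u • U + t • (Complex.I • T) + k • (Complex.I • K) := by
  simp only [hsu, Submodule.mem_span_insert, Submodule.mem_span_singleton] at hx
  obtain ⟨u, y, ⟨t, z, ⟨k, rfl⟩, rfl⟩, rfl⟩ := hx
  exact ⟨u, t, k, by abel⟩

lemma combo_mem (u t k : ℝ) :
    u • U + t • (Complex.I • T) + k • (Complex.I • K) ∈ hsu := by
  apply Submodule.add_mem
  apply Submodule.add_mem
  · exact Submodule.smul_mem _ _ (Submodule.subset_span (by simp))
  · exact Submodule.smul_mem _ _ (Submodule.subset_span (by simp))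
  · exact Submodule.smul_mem _ _ (Submodule.subset_span (by simp))

lemma combo_zero {u t k : ℝ}
    (h : u • U + t • (Complex.I • T) + k • (Complex.I • K) = 0) :
    u = 0 ∧ t = 0 ∧ k = 0 := by
  have h00 := congrFun (congrFun h 0) 0
  have h01 := congrFun (congrFun h 0) 1
  simp [U, T, K, Complex.ext_iff] at h00 h01
  exact ⟨h01.1, h01.2, h00⟩

lemma eqA (u₁ t₁ k₁ u₃ t₃ k₃ : ℝ) :
    ⁅U, T - (u₁ • U + t₁ • (Complex.I • T) + k₁ • (Complex.I • K))⁆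
      - (2:ℝ) • (K - (u₃ • U + t₃ • (Complex.I • T) + k₃ • (Complex.I • K)))
    = (2*u₃) • U + (2*k₁ + 2*t₃) • (Complex.I • T) + (2*k₃ - 2*t₁) • (Complex.I • K) := by
  ext i j
  fin_cases i <;> fin_cases j <;>
    simp [Ring.lie_def, K, T, U, Matrix.mul_apply, Fin.sum_univ_two, Complex.ext_iff] <;>
    first | (constructor <;> first | trivial | ring) | ring

lemma eqB (u₂ t₂ k₂ : ℝ) :
    ⁅U, Complex.I • U - (u₂ • U + t₂ • (Complex.I • T) + k₂ • (Complex.I • K))⁆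
    = (0:ℝ) • U + (2*k₂) • (Complex.I • T) + (-(2*t₂)) • (Complex.I • K) := by
  ext i j
  fin_cases i <;> fin_cases j <;>
    simp [Ring.lie_def, K, T, U, Matrix.mul_apply, Fin.sum_univ_two, Complex.ext_iff] <;>
    first | (constructor <;> first | trivial | ring) | ring

lemma eqC (u₁ t₁ k₁ u₃ t₃ k₃ : ℝ) :
    ⁅U, K - (u₃ • U + t₃ • (Complex.I • T) + k₃ • (Complex.I • K))⁆
      + (2:ℝ) • (T - (u₁ • U + t₁ • (Complex.I • T) + k₁ • (Complex.I • K)))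
    = (-(2*u₁)) • U + (2*k₃ - 2*t₁) • (Complex.I • T) + (-(2*t₃) - 2*k₁) • (Complex.I • K) := by
  ext i j
  fin_cases i <;> fin_cases j <;>
    simp [Ring.lie_def, K, T, U, Matrix.mul_apply, Fin.sum_univ_two, Complex.ext_iff] <;>
    first | (constructor <;> first | trivial | ring) | ring

lemma eqD (u₁ t₁ k₁ : ℝ) :
    ⁅Complex.I • T, T - (u₁ • U + t₁ • (Complex.I • T) + k₁ • (Complex.I • K))⁆
    = (-(2*k₁)) • U + (0:ℝ) • (Complex.I • T) + (2*u₁) • (Complex.I • K) := by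
  ext i j
  fin_cases i <;> fin_cases j <;>
    simp [Ring.lie_def, K, T, U, Matrix.mul_apply, Fin.sum_univ_two, Complex.ext_iff] <;>
    first | (constructor <;> first | trivial | ring) | ring

lemma eqE (u₂ t₂ k₂ u₃ t₃ k₃ : ℝ) :
    ⁅Complex.I • T, Complex.I • U - (u₂ • U + t₂ • (Complex.I • T) + k₂ • (Complex.I • K))⁆
      - (2:ℝ) • (K - (u₃ • U + t₃ • (Complex.I • T) + k₃ • (Complex.I • K)))
    = (2*u₃ - 2*k₂) • U + (2*t₃) • (Complex.I • T) + (2*u₂ + 2*k₃) • (Complex.I • K) := by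
  ext i j
  fin_cases i <;> fin_cases j <;>
    simp [Ring.lie_def, K, T, U, Matrix.mul_apply, Fin.sum_univ_two, Complex.ext_iff] <;>
    first | (constructor <;> first | trivial | ring) | ring

set_option maxHeartbeats 1000000 in
/-- every real subspace `m` of `sl₂(ℂ)` with `sl₂(ℂ) = h ⊕ m`
(as real vector spaces) and `[h, m] ⊆ m` equals `m_a` for some `a ∈ ℝ`. -/
theorem stmt9 (m : Submodule ℝ M2C) (hle : m ≤ sl2c)
    (hsup : hsu ⊔ m = sl2c) (hinf : hsu ⊓ m = ⊥)
    (hbr : ∀ x ∈ hsu, ∀ y ∈ m, ⁅x, y⁆ ∈ m) :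
    ∃ a : ℝ, m = ma a := by
  have hUmem : U ∈ hsu := Submodule.subset_span (by simp)
  have hiTmem : Complex.I • T ∈ hsu := Submodule.subset_span (by simp)
  -- decompose T, I•U, K along hsu ⊕ m
  have decomp : ∀ w : M2C, w ∈ sl2c →
      ∃ u t k : ℝ, w - (u • U + t • (Complex.I • T) + k • (Complex.I • K)) ∈ m := by
    intro w hw
    rw [← hsup, Submodule.mem_sup] at hw
    obtain ⟨y, hy, z, hz, hyz⟩ := hw
    obtain ⟨u, t, k, rfl⟩ := mem_hsu hy
    exact ⟨u, t, k, by rw [show w - (u • U + t • (Complex.I • T) + k • (Complex.I • K)) = z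
      from by rw [← hyz]; abel]; exact hz⟩
  obtain ⟨u₁, t₁, k₁, hX⟩ := decomp T (Submodule.subset_span (by simp))
  obtain ⟨u₂, t₂, k₂, hY⟩ := decomp (Complex.I • U) (Submodule.subset_span (by simp))
  obtain ⟨u₃, t₃, k₃, hZ⟩ := decomp K (Submodule.subset_span (by simp))
  have key : ∀ {w : M2C}, w ∈ m → w ∈ hsu → w = 0 := by
    intro w hm hh
    have : w ∈ hsu ⊓ m := ⟨hh, hm⟩
    rw [hinf, Submodule.mem_bot] at this
    exact this
  -- constraint A
  have memA := Submodule.sub_mem _ (hbr U hUmem _ hX) (Submodule.smul_mem _ (2:ℝ) hZ)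
  rw [eqA u₁ t₁ k₁ u₃ t₃ k₃] at memA
  obtain ⟨hA1, hA2, hA3⟩ := combo_zero (key memA (combo_mem _ _ _))
  -- constraint B
  have memB := hbr U hUmem _ hY
  rw [eqB u₂ t₂ k₂] at memB
  obtain ⟨_, hB2, hB3⟩ := combo_zero (key memB (combo_mem _ _ _))
  -- constraint C
  have memC := Submodule.add_mem _ (hbr U hUmem _ hZ) (Submodule.smul_mem _ (2:ℝ) hX)
  rw [eqC u₁ t₁ k₁ u₃ t₃ k₃] at memC
  obtain ⟨hC1, _, _⟩ := combo_zero (key memC (combo_mem _ _ _))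
  -- constraint D
  have memD := hbr _ hiTmem _ hX
  rw [eqD u₁ t₁ k₁] at memD
  obtain ⟨hD1, _, _⟩ := combo_zero (key memD (combo_mem _ _ _))
  -- constraint E
  have memE := Submodule.sub_mem _ (hbr _ hiTmem _ hY) (Submodule.smul_mem _ (2:ℝ) hZ)
  rw [eqE u₂ t₂ k₂ u₃ t₃ k₃] at memE
  obtain ⟨_, _, hE3⟩ := combo_zero (key memE (combo_mem _ _ _))
  -- solve the linear equations
  have hu₁ : u₁ = 0 := by linarith
  have hk₁ : k₁ = 0 := by linarith
  have ht₂ : t₂ = 0 := by linarith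
  have hk₂ : k₂ = 0 := by linarith
  have hu₃ : u₃ = 0 := by linarith
  have ht₃ : t₃ = 0 := by linarith
  have hk₃ : k₃ = t₁ := by linarith
  have hu₂ : u₂ = -t₁ := by linarith
  refine ⟨-t₁, ?_⟩
  -- the three generators of `ma (-t₁)` are exactly the elements found in `m`
  have hgen1 : T + (-t₁ : ℝ) • Complex.I • T
      = T - (u₁ • U + t₁ • (Complex.I • T) + k₁ • (Complex.I • K)) := by
    rw [hu₁, hk₁]; module
  have hgen2 : Complex.I • U - (-t₁ : ℝ) • U
      = Complex.I • U - (u₂ • U + t₂ • (Complex.I • T) + k₂ • (Complex.I • K)) := by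
    rw [hu₂, ht₂, hk₂]; module
  have hgen3 : K + (-t₁ : ℝ) • Complex.I • K
      = K - (u₃ • U + t₃ • (Complex.I • T) + k₃ • (Complex.I • K)) := by
    rw [hu₃, ht₃, hk₃]; module
  have hma_le : ma (-t₁) ≤ m := by
    rw [ma, Submodule.span_le]
    rintro w (rfl | rfl | rfl)
    · exact hgen1 ▸ hX
    · exact hgen2 ▸ hY
    · exact hgen3 ▸ hZ
  -- `hsu ⊔ ma (-t₁)` contains `sl2c`
  have hsup' : sl2c ≤ hsu ⊔ ma (-t₁) := by
    rw [sl2c, Submodule.span_le]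
    have hU' : U ∈ hsu ⊔ ma (-t₁) := Submodule.mem_sup_left hUmem
    have hiT' : Complex.I • T ∈ hsu ⊔ ma (-t₁) := Submodule.mem_sup_left hiTmem
    have hiK' : Complex.I • K ∈ hsu ⊔ ma (-t₁) :=
      Submodule.mem_sup_left (Submodule.subset_span (by simp))
    have g1 : T + (-t₁ : ℝ) • Complex.I • T ∈ hsu ⊔ ma (-t₁) :=
      Submodule.mem_sup_right (Submodule.subset_span (by simp [ma]))
    have g2 : Complex.I • U - (-t₁ : ℝ) • U ∈ hsu ⊔ ma (-t₁) :=
      Submodule.mem_sup_right (Submodule.subset_span (by simp [ma]))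
    have g3 : K + (-t₁ : ℝ) • Complex.I • K ∈ hsu ⊔ ma (-t₁) :=
      Submodule.mem_sup_right (Submodule.subset_span (by simp [ma]))
    rintro w (rfl | rfl | rfl | rfl | rfl | rfl)
    · have := Submodule.sub_mem _ g3 (Submodule.smul_mem _ (-t₁) hiK')
      simpa using this
    · have := Submodule.sub_mem _ g1 (Submodule.smul_mem _ (-t₁) hiT')
      simpa using this
    · exact hU'
    · exact hiK'
    · exact hiT'
    · have := Submodule.add_mem _ g2 (Submodule.smul_mem _ (-t₁) hU')
      simpa using this
  -- conclude m = ma (-t₁)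
  refine le_antisymm ?_ hma_le
  intro x hx
  have hx' : x ∈ hsu ⊔ ma (-t₁) := hsup' (hle hx)
  rw [Submodule.mem_sup] at hx'
  obtain ⟨y, hy, z, hz, hyz⟩ := hx'
  have hy0 : y = 0 := key (by
    have hyx : y = x - z := by rw [← hyz]; abel
    rw [hyx]
    exact Submodule.sub_mem _ hx (hma_le hz)) hy
  rw [← hyz, hy0, zero_add]
  exact hz

end Stmt9
end

section
/- The map φ : sl₂(ℂ) → sl₂(ℂ) sending a matrix X to its entrywise complex conjugate X̄ is an automorphism of sl₂(ℂ) as a real Lie algebra; it maps h = span_ℝ{U, iT, iK} onto itself, and for every a ∈ ℝ it maps m_a = span_ℝ{T + a·iT, iU − a·U, K + a·iK} onto m_{−a}. -/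
namespace Stmt11

abbrev M2C := Matrix (Fin 2) (Fin 2) ℂ

def K : M2C := !![1, 0; 0, -1]
def T : M2C := !![0, 1; 1, 0]
def U : M2C := !![0, 1; -1, 0]

/-- `sl₂(ℂ)` as a 6-dimensional real Lie algebra: the real span of
`K, T, U, iK, iT, iU`. -/
noncomputable def sl2c : Submodule ℝ M2C :=
  Submodule.span ℝ {K, T, U, Complex.I • K, Complex.I • T, Complex.I • U}

/-- `h = span_ℝ{U, iT, iK}`. -/
noncomputable def hsu : Submodule ℝ M2C :=
  Submodule.span ℝ {U, Complex.I • T, Complex.I • K}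

/-- `m_a = span_ℝ{T + a·iT, iU − a·U, K + a·iK}`. -/
noncomputable def ma (a : ℝ) : Submodule ℝ M2C :=
  Submodule.span ℝ
    {T + a • Complex.I • T, Complex.I • U - a • U, K + a • Complex.I • K}

/-- Entrywise complex conjugation of 2×2 complex matrices, as a real-algebra
automorphism. -/
noncomputable def phi : M2C ≃ₐ[ℝ] M2C := AlgEquiv.mapMatrix Complex.conjAe

lemma phi_apply (x : M2C) (i j : Fin 2) : phi x i j = (starRingEnd ℂ) (x i j) := by
  simp [phi, AlgEquiv.mapMatrix_apply, Matrix.map_apply]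

lemma phi_K : phi K = K := by
  ext i j; rw [phi_apply]; fin_cases i <;> fin_cases j <;> simp [K]

lemma phi_T : phi T = T := by
  ext i j; rw [phi_apply]; fin_cases i <;> fin_cases j <;> simp [T]

lemma phi_U : phi U = U := by
  ext i j; rw [phi_apply]; fin_cases i <;> fin_cases j <;> simp [U]

lemma phi_smul_I (X : M2C) (h : phi X = X) : phi (Complex.I • X) = -(Complex.I • X) := by
  ext i j
  rw [phi_apply]
  have := congrFun (congrFun h i) j
  rw [phi_apply] at this
  simp [Matrix.smul_apply, map_mul, Complex.conj_I, this]


lemma phi_iK : phi (Complex.I • K) = -(Complex.I • K) := phi_smul_I _ phi_K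
lemma phi_iT : phi (Complex.I • T) = -(Complex.I • T) := phi_smul_I _ phi_T
lemma phi_iU : phi (Complex.I • U) = -(Complex.I • U) := phi_smul_I _ phi_U

lemma phi_ma1 (a : ℝ) : phi (T + a • Complex.I • T) = T + (-a) • Complex.I • T := by
  rw [map_add, map_smul, phi_T, phi_iT]; module

lemma phi_ma2 (a : ℝ) :
    phi (Complex.I • U - a • U) = -(Complex.I • U - (-a) • U) := by
  rw [map_sub, phi_iU, map_smul, phi_U]; module

lemma phi_ma3 (a : ℝ) : phi (K + a • Complex.I • K) = K + (-a) • Complex.I • K := by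
  rw [map_add, map_smul, phi_K, phi_iK]; module

lemma phi_lin (x : M2C) : phi.toLinearMap x = phi x := rfl

/-- entrywise conjugation `X ↦ X̄` is a real Lie algebra
automorphism of `sl₂(ℂ)` mapping `h` onto itself and `m_a` onto `m_{−a}`. -/
theorem stmt11 :
    (∀ (x : M2C) (i j : Fin 2), phi x i j = (starRingEnd ℂ) (x i j)) ∧
    Function.Bijective phi ∧
    (∀ x y : M2C, phi ⁅x, y⁆ = ⁅phi x, phi y⁆) ∧
    Submodule.map phi.toLinearMap sl2c = sl2c ∧
    Submodule.map phi.toLinearMap hsu = hsu ∧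
    (∀ a : ℝ, Submodule.map phi.toLinearMap (ma a) = ma (-a)) := by
  refine ⟨phi_apply, phi.bijective, ?_, ?_, ?_, ?_⟩
  · intro x y
    simp [Ring.lie_def, map_sub, map_mul]
  · rw [sl2c, Submodule.map_span]
    apply Submodule.span_eq_span
    · rintro x ⟨y, hy, rfl⟩
      simp only [Set.mem_insert_iff, Set.mem_singleton_iff] at hy
      rcases hy with rfl|rfl|rfl|rfl|rfl|rfl <;>
        simp only [phi_lin, phi_K, phi_T, phi_U, phi_iK, phi_iT, phi_iU, SetLike.mem_coe]
      · exact Submodule.subset_span (by simp)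
      · exact Submodule.subset_span (by simp)
      · exact Submodule.subset_span (by simp)
      · exact Submodule.neg_mem _ (Submodule.subset_span (by simp))
      · exact Submodule.neg_mem _ (Submodule.subset_span (by simp))
      · exact Submodule.neg_mem _ (Submodule.subset_span (by simp))
    · intro x hx
      simp only [Set.mem_insert_iff, Set.mem_singleton_iff] at hx
      have mem : ∀ z ∈ ({K, T, U, Complex.I • K, Complex.I • T, Complex.I • U} : Set M2C),
          phi z ∈ Submodule.span ℝ
            (phi.toLinearMap '' {K, T, U, Complex.I • K, Complex.I • T, Complex.I • U}) :=
        fun z hz => Submodule.subset_span ⟨z, hz, rfl⟩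
      rcases hx with rfl|rfl|rfl|rfl|rfl|rfl
      · have := mem K (by simp); rwa [phi_K] at this
      · have := mem T (by simp); rwa [phi_T] at this
      · have := mem U (by simp); rwa [phi_U] at this
      · have := Submodule.neg_mem _ (mem (Complex.I • K) (by simp))
        rwa [phi_iK, neg_neg] at this
      · have := Submodule.neg_mem _ (mem (Complex.I • T) (by simp))
        rwa [phi_iT, neg_neg] at this
      · have := Submodule.neg_mem _ (mem (Complex.I • U) (by simp))
        rwa [phi_iU, neg_neg] at this
  · rw [hsu, Submodule.map_span]
    apply Submodule.span_eq_span
    · rintro x ⟨y, hy, rfl⟩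
      simp only [Set.mem_insert_iff, Set.mem_singleton_iff] at hy
      rcases hy with rfl|rfl|rfl <;>
        simp only [phi_lin, phi_K, phi_T, phi_U, phi_iK, phi_iT, phi_iU, SetLike.mem_coe]
      · exact Submodule.subset_span (by simp)
      · exact Submodule.neg_mem _ (Submodule.subset_span (by simp))
      · exact Submodule.neg_mem _ (Submodule.subset_span (by simp))
    · intro x hx
      simp only [Set.mem_insert_iff, Set.mem_singleton_iff] at hx
      have mem : ∀ z ∈ ({U, Complex.I • T, Complex.I • K} : Set M2C),
          phi z ∈ Submodule.span ℝ
            (phi.toLinearMap '' {U, Complex.I • T, Complex.I • K}) :=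
        fun z hz => Submodule.subset_span ⟨z, hz, rfl⟩
      rcases hx with rfl|rfl|rfl
      · have := mem U (by simp); rwa [phi_U] at this
      · have := Submodule.neg_mem _ (mem (Complex.I • T) (by simp))
        rwa [phi_iT, neg_neg] at this
      · have := Submodule.neg_mem _ (mem (Complex.I • K) (by simp))
        rwa [phi_iK, neg_neg] at this
  · intro a
    rw [ma, ma, Submodule.map_span]
    apply Submodule.span_eq_span
    · rintro x ⟨y, hy, rfl⟩
      simp only [Set.mem_insert_iff, Set.mem_singleton_iff] at hy
      rcases hy with rfl|rfl|rfl
      · rw [phi_lin, phi_ma1]; exact Submodule.subset_span (by simp)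
      · rw [phi_lin, phi_ma2]
        exact Submodule.neg_mem _ (Submodule.subset_span (by simp))
      · rw [phi_lin, phi_ma3]; exact Submodule.subset_span (by simp)
    · intro x hx
      simp only [Set.mem_insert_iff, Set.mem_singleton_iff] at hx
      have mem : ∀ z ∈ ({T + a • Complex.I • T, Complex.I • U - a • U,
            K + a • Complex.I • K} : Set M2C),
          phi z ∈ Submodule.span ℝ (phi.toLinearMap ''
            {T + a • Complex.I • T, Complex.I • U - a • U, K + a • Complex.I • K}) :=
        fun z hz => Submodule.subset_span ⟨z, hz, rfl⟩
      rcases hx with rfl|rfl|rfl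
      · have := mem (T + a • Complex.I • T) (by simp); rwa [phi_ma1] at this
      · have := Submodule.neg_mem _ (mem (Complex.I • U - a • U) (by simp))
        rwa [phi_ma2, neg_neg] at this
      · have := mem (K + a • Complex.I • K) (by simp); rwa [phi_ma3] at this


end Stmt11
end

section
/- Let g = sl₂(ℝ) × ℝ with bracket [(X,s),(Y,t)] = ([X,Y], 0), let h = span{(K,1)}, and for a ∈ ℝ with a ≠ −1 let m_a = span{(U,0), (T,0), (aK, 1+a)}. Then for every a ∈ ℝ with a ≠ −1 there exist g₀ ∈ SL₂(ℝ) and a nonzero element (X, t) ∈ m_a such that (g₀ X g₀⁻¹, t) ∈ h. -/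
namespace Stmt13

abbrev M2 := Matrix (Fin 2) (Fin 2) ℝ

/-- `g = sl₂(ℝ) × ℝ`, realized inside the product ring `M₂(ℝ) × ℝ`, whose
commutator bracket is `[(X,s), (Y,t)] = ([X,Y], 0)`. -/
abbrev g12 := M2 × ℝ

def K : M2 := !![1, 0; 0, -1]
def T : M2 := !![0, 1; 1, 0]
def U : M2 := !![0, 1; -1, 0]

/-- `h = span{(K, 1)}`. -/
def h1 : Submodule ℝ g12 := Submodule.span ℝ {(K, (1:ℝ))}

/-- `m_a = span{(U,0), (T,0), (aK, 1+a)}`. -/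
noncomputable def m1 (a : ℝ) : Submodule ℝ g12 :=
  Submodule.span ℝ {(U, (0:ℝ)), (T, (0:ℝ)), (a • K, 1 + a)}

/-- for every `a ≠ −1` there are `g₀ ∈ SL₂(ℝ)` and a nonzero
`(X, t) ∈ m_a` with `(g₀ X g₀⁻¹, t) ∈ h`. -/
theorem stmt13 :
    ∀ a : ℝ, a ≠ -1 →
      ∃ (g0 : Matrix.SpecialLinearGroup (Fin 2) ℝ) (X : M2) (t : ℝ),
        (X, t) ∈ m1 a ∧ (X, t) ≠ (0 : g12) ∧
        ((g0 : M2) * X * (g0 : M2)⁻¹, t) ∈ h1 := by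
  intro a ha
  have h1a : (1:ℝ) + a ≠ 0 := by intro h; apply ha; linarith
  set d : ℝ := 2 * (1 + a) with hdef
  have hd : d ≠ 0 := by simp [hdef, h1a]
  have hdet : (!![1/d, 1/d; -1, 1+2*a] : M2).det = 1 := by
    simp [Matrix.det_fin_two_of]
    field_simp [hdef]
    ring
  refine ⟨⟨!![1/d, 1/d; -1, 1+2*a], hdet⟩, !![a, 1+2*a; 1, -a], 1+a, ?_, ?_, ?_⟩
  · -- membership in m1 a
    have hcomb : ((!![a, 1+2*a; 1, -a] : M2), (1+a : ℝ)) =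
        a • ((U, (0:ℝ)) : g12) + (1+a) • ((T, (0:ℝ)) : g12) + (1:ℝ) • ((a • K, 1+a) : g12) := by
      refine Prod.ext ?_ ?_
      · show (!![a, 1+2*a; 1, -a] : M2) = a • U + (1+a) • T + (1:ℝ) • (a • K)
        simp [K, T, U]
        ring
      · simp
    rw [hcomb]
    have h1 : ((U, (0:ℝ)) : g12) ∈ m1 a := Submodule.subset_span (by simp)
    have h2 : ((T, (0:ℝ)) : g12) ∈ m1 a := Submodule.subset_span (by simp)
    have h3 : ((a • K, 1+a) : g12) ∈ m1 a := Submodule.subset_span (by simp [m1])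
    exact Submodule.add_mem _ (Submodule.add_mem _ (Submodule.smul_mem _ _ h1)
      (Submodule.smul_mem _ _ h2)) (Submodule.smul_mem _ _ h3)
  · -- nonzero
    intro h
    exact h1a (congrArg Prod.snd h)
  · -- conjugate lies in h1
    have hinv : (!![1/d, 1/d; -1, 1+2*a] : M2)⁻¹ = !![1+2*a, -(1/d); 1, 1/d] := by
      apply Matrix.inv_eq_right_inv
      ext i j
      fin_cases i <;> fin_cases j <;>
        (simp [Matrix.mul_apply, Fin.sum_univ_succ]; (try field_simp [hdef]); (try ring))
    show (((!![1/d, 1/d; -1, 1+2*a] : M2)) * _ * ((!![1/d, 1/d; -1, 1+2*a] : M2))⁻¹, (1+a:ℝ)) ∈ h1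
    rw [hinv]
    have hconj : (!![1/d, 1/d; -1, 1+2*a] : M2) * !![a, 1+2*a; 1, -a] * !![1+2*a, -(1/d); 1, 1/d]
        = (1+a) • K := by
      ext i j
      fin_cases i <;> fin_cases j <;>
        (simp [Matrix.mul_apply, Fin.sum_univ_succ, K]; (try field_simp [hdef]); (try ring))
    rw [hconj]
    have : (((1+a) • K : M2), (1+a:ℝ)) = (1+a) • ((K, (1:ℝ)) : g12) := by simp
    rw [this]
    exact Submodule.smul_mem _ _ (Submodule.subset_span rfl)

end Stmt13
end

section
/- Let g be the 5-dimensional real Lie subalgebra of the 3×3 real matrices spanned by K' = E₂₂ − E₃₃, T' = E₂₃ + E₃₂, U' = E₂₃ − E₃₂, e₁ = E₁₂, e₂ = E₁₃, and let h = span{K', e₁}. Then h is a 2-dimensional subalgebra of g containing no nonzero ideal of g, and the subspace m = span{e₂, T', U'} satisfies: g = h ⊕ m as vector spaces, [h, m] ⊆ m, and m generates g as a Lie algebra. Moreover, m is the unique linear subspace of g with g = h ⊕ m and [h, m] ⊆ m. -/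
namespace Stmt14

attribute [local instance] LieRing.ofAssociativeRing

abbrev M3 := Matrix (Fin 3) (Fin 3) ℝ

def K' : M3 := !![0, 0, 0; 0, 1, 0; 0, 0, -1]
def T' : M3 := !![0, 0, 0; 0, 0, 1; 0, 1, 0]
def U' : M3 := !![0, 0, 0; 0, 0, 1; 0, -1, 0]
def e1 : M3 := !![0, 1, 0; 0, 0, 0; 0, 0, 0]
def e2 : M3 := !![0, 0, 1; 0, 0, 0; 0, 0, 0]

/-- `g = span{K', T', U', e₁, e₂} ≅ sl₂(ℝ) ⋉ ℝ²` inside the 3×3 matrices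
(commutator bracket). -/
def g14 : Submodule ℝ M3 := Submodule.span ℝ {K', T', U', e1, e2}

/-- `h = span{K', e₁}`. -/
def h14 : Submodule ℝ M3 := Submodule.span ℝ {K', e1}

/-- `m = span{e₂, T', U'}`. -/
def m14 : Submodule ℝ M3 := Submodule.span ℝ {e2, T', U'}

def gS : Submodule ℝ M3 where
  carrier := {x | x 0 0 = 0 ∧ x 1 0 = 0 ∧ x 2 0 = 0 ∧ x 2 2 = -x 1 1}
  add_mem' := by
    rintro a b ⟨h1, h2, h3, h4⟩ ⟨g1, g2, g3, g4⟩
    refine ⟨?_, ?_, ?_, ?_⟩ <;> simp [Matrix.add_apply, h1, h2, h3, h4, g1, g2, g3, g4] <;> ring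
  zero_mem' := by refine ⟨rfl, rfl, rfl, by simp⟩
  smul_mem' := by
    rintro c a ⟨h1, h2, h3, h4⟩
    refine ⟨?_, ?_, ?_, ?_⟩ <;> simp [Matrix.smul_apply, h1, h2, h3, h4]

lemma mem_gS {x : M3} : x ∈ gS ↔ (x 0 0 = 0 ∧ x 1 0 = 0 ∧ x 2 0 = 0 ∧ x 2 2 = -x 1 1) := Iff.rfl

def hS : Submodule ℝ M3 where
  carrier := {x | x 0 0 = 0 ∧ x 0 2 = 0 ∧ x 1 0 = 0 ∧ x 1 2 = 0 ∧ x 2 0 = 0 ∧ x 2 1 = 0 ∧ x 2 2 = -x 1 1}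
  add_mem' := by
    rintro a b ⟨h1, h2, h3, h4, h5, h6, h7⟩ ⟨g1, g2, g3, g4, g5, g6, g7⟩
    refine ⟨?_, ?_, ?_, ?_, ?_, ?_, ?_⟩ <;>
      simp [Matrix.add_apply, h1, h2, h3, h4, h5, h6, h7, g1, g2, g3, g4, g5, g6, g7] <;> ring
  zero_mem' := by refine ⟨rfl, rfl, rfl, rfl, rfl, rfl, by simp⟩
  smul_mem' := by
    rintro c a ⟨h1, h2, h3, h4, h5, h6, h7⟩
    refine ⟨?_, ?_, ?_, ?_, ?_, ?_, ?_⟩ <;>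
      simp [Matrix.smul_apply, h1, h2, h3, h4, h5, h6, h7]

lemma mem_hS {x : M3} : x ∈ hS ↔ (x 0 0 = 0 ∧ x 0 2 = 0 ∧ x 1 0 = 0 ∧ x 1 2 = 0 ∧ x 2 0 = 0 ∧ x 2 1 = 0 ∧ x 2 2 = -x 1 1) := Iff.rfl

def mS : Submodule ℝ M3 where
  carrier := {x | x 0 0 = 0 ∧ x 0 1 = 0 ∧ x 1 0 = 0 ∧ x 1 1 = 0 ∧ x 2 0 = 0 ∧ x 2 2 = 0}
  add_mem' := by
    rintro a b ⟨h1, h2, h3, h4, h5, h6⟩ ⟨g1, g2, g3, g4, g5, g6⟩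
    refine ⟨?_, ?_, ?_, ?_, ?_, ?_⟩ <;>
      simp [Matrix.add_apply, h1, h2, h3, h4, h5, h6, g1, g2, g3, g4, g5, g6]
  zero_mem' := ⟨rfl, rfl, rfl, rfl, rfl, rfl⟩
  smul_mem' := by
    rintro c a ⟨h1, h2, h3, h4, h5, h6⟩
    refine ⟨?_, ?_, ?_, ?_, ?_, ?_⟩ <;>
      simp [Matrix.smul_apply, h1, h2, h3, h4, h5, h6]

lemma mem_mS {x : M3} : x ∈ mS ↔ (x 0 0 = 0 ∧ x 0 1 = 0 ∧ x 1 0 = 0 ∧ x 1 1 = 0 ∧ x 2 0 = 0 ∧ x 2 2 = 0) := Iff.rfl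
end Stmt14
namespace Stmt14

attribute [local instance] LieRing.ofAssociativeRing

lemma two_eq : (⟨2, by norm_num⟩ : Fin 3) = 2 := rfl

lemma g14_eq : g14 = gS := by
  apply le_antisymm
  · rw [g14, Submodule.span_le]
    rintro x hx
    simp only [Set.mem_insert_iff, Set.mem_singleton_iff] at hx
    rcases hx with rfl | rfl | rfl | rfl | rfl <;>
      exact ⟨by norm_num [K', T', U', e1, e2, Matrix.vecHead, Matrix.vecTail, Function.comp, Matrix.cons_val_two], by norm_num [K', T', U', e1, e2, Matrix.vecHead, Matrix.vecTail, Function.comp, Matrix.cons_val_two],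
        by norm_num [K', T', U', e1, e2, Matrix.vecHead, Matrix.vecTail, Function.comp, Matrix.cons_val_two], by norm_num [K', T', U', e1, e2, Matrix.vecHead, Matrix.vecTail, Function.comp, Matrix.cons_val_two]⟩
  · rintro x ⟨h1, h2, h3, h4⟩
    have hx : x = x 1 1 • K' + ((x 1 2 + x 2 1)/2) • T' + ((x 1 2 - x 2 1)/2) • U'
        + x 0 1 • e1 + x 0 2 • e2 := by
      ext i j
      fin_cases i <;> fin_cases j <;>
        simp [K', T', U', e1, e2, Matrix.add_apply, Matrix.smul_apply, two_eq, Matrix.vecHead, Matrix.vecTail, Function.comp,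
          h1, h2, h3, h4] <;> ring
    rw [hx, g14]
    have mK : K' ∈ ({K', T', U', e1, e2} : Set M3) := by simp
    have mT : T' ∈ ({K', T', U', e1, e2} : Set M3) := by simp
    have mU : U' ∈ ({K', T', U', e1, e2} : Set M3) := by simp
    have m1 : e1 ∈ ({K', T', U', e1, e2} : Set M3) := by simp
    have m2 : e2 ∈ ({K', T', U', e1, e2} : Set M3) := by simp
    exact Submodule.add_mem _ (Submodule.add_mem _ (Submodule.add_mem _ (Submodule.add_mem _
      (Submodule.smul_mem _ _ (Submodule.subset_span mK))
      (Submodule.smul_mem _ _ (Submodule.subset_span mT)))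
      (Submodule.smul_mem _ _ (Submodule.subset_span mU)))
      (Submodule.smul_mem _ _ (Submodule.subset_span m1)))
      (Submodule.smul_mem _ _ (Submodule.subset_span m2))

lemma h14_eq : h14 = hS := by
  apply le_antisymm
  · rw [h14, Submodule.span_le]
    rintro x hx
    simp only [Set.mem_insert_iff, Set.mem_singleton_iff] at hx
    rcases hx with rfl | rfl <;>
      refine ⟨by norm_num [K', e1, Matrix.vecHead, Matrix.vecTail, Function.comp, Matrix.cons_val_two], by norm_num [K', e1, Matrix.vecHead, Matrix.vecTail, Function.comp, Matrix.cons_val_two], by norm_num [K', e1, Matrix.vecHead, Matrix.vecTail, Function.comp, Matrix.cons_val_two],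
        by norm_num [K', e1, Matrix.vecHead, Matrix.vecTail, Function.comp, Matrix.cons_val_two], by norm_num [K', e1, Matrix.vecHead, Matrix.vecTail, Function.comp, Matrix.cons_val_two], by norm_num [K', e1, Matrix.vecHead, Matrix.vecTail, Function.comp, Matrix.cons_val_two], by norm_num [K', e1, Matrix.vecHead, Matrix.vecTail, Function.comp, Matrix.cons_val_two]⟩
  · rintro x ⟨h1, h2, h3, h4, h5, h6, h7⟩
    have hx : x = x 1 1 • K' + x 0 1 • e1 := by
      ext i j
      fin_cases i <;> fin_cases j <;>
        simp [K', e1, Matrix.add_apply, Matrix.smul_apply, two_eq, Matrix.vecHead, Matrix.vecTail, Function.comp,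
          h1, h2, h3, h4, h5, h6, h7]
    rw [hx, h14]
    exact Submodule.add_mem _
      (Submodule.smul_mem _ _ (Submodule.subset_span (by simp)))
      (Submodule.smul_mem _ _ (Submodule.subset_span (by simp)))

lemma m14_eq : m14 = mS := by
  apply le_antisymm
  · rw [m14, Submodule.span_le]
    rintro x hx
    simp only [Set.mem_insert_iff, Set.mem_singleton_iff] at hx
    rcases hx with rfl | rfl | rfl <;>
      refine ⟨by norm_num [T', U', e2, Matrix.vecHead, Matrix.vecTail, Function.comp, Matrix.cons_val_two], by norm_num [T', U', e2, Matrix.vecHead, Matrix.vecTail, Function.comp, Matrix.cons_val_two], by norm_num [T', U', e2, Matrix.vecHead, Matrix.vecTail, Function.comp, Matrix.cons_val_two],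
        by norm_num [T', U', e2, Matrix.vecHead, Matrix.vecTail, Function.comp, Matrix.cons_val_two], by norm_num [T', U', e2, Matrix.vecHead, Matrix.vecTail, Function.comp, Matrix.cons_val_two], by norm_num [T', U', e2, Matrix.vecHead, Matrix.vecTail, Function.comp, Matrix.cons_val_two]⟩
  · rintro x ⟨h1, h2, h3, h4, h5, h6⟩
    have hx : x = x 0 2 • e2 + ((x 1 2 + x 2 1)/2) • T' + ((x 1 2 - x 2 1)/2) • U' := by
      ext i j
      fin_cases i <;> fin_cases j <;>
        simp [T', U', e2, Matrix.add_apply, Matrix.smul_apply, two_eq, Matrix.vecHead, Matrix.vecTail, Function.comp,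
          h1, h2, h3, h4, h5, h6] <;> ring
    rw [hx, m14]
    exact Submodule.add_mem _ (Submodule.add_mem _
      (Submodule.smul_mem _ _ (Submodule.subset_span (by simp)))
      (Submodule.smul_mem _ _ (Submodule.subset_span (by simp))))
      (Submodule.smul_mem _ _ (Submodule.subset_span (by simp)))
end Stmt14
namespace Stmt14

attribute [local instance] LieRing.ofAssociativeRing

lemma lieK_apply (y : M3) :
    ⁅K', y⁆ = !![0, -(y 0 1), y 0 2; y 1 0, 0, 2 * y 1 2; -(y 2 0), -(2 * y 2 1), 0] := by
  ext i j
  fin_cases i <;> fin_cases j <;>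
    norm_num [K', Ring.lie_def, Matrix.mul_apply, Fin.sum_univ_three,
      Matrix.vecHead, Matrix.vecTail, Matrix.vecMul, dotProduct,
      Function.comp, Fin.isValue, two_eq, Matrix.cons_val_two] <;> ring

lemma lieT_apply (y : M3) :
    ⁅T', y⁆ = !![0, -(y 0 2), -(y 0 1); y 2 0, y 2 1 - y 1 2, y 2 2 - y 1 1;
      y 1 0, y 1 1 - y 2 2, y 1 2 - y 2 1] := by
  ext i j
  fin_cases i <;> fin_cases j <;>
    norm_num [T', Ring.lie_def, Matrix.mul_apply, Fin.sum_univ_three,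
      Matrix.vecHead, Matrix.vecTail, Matrix.vecMul, dotProduct,
      Function.comp, Fin.isValue, two_eq, Matrix.cons_val_two] <;> ring

lemma lieTU : ⁅T', U'⁆ = (-2 : ℝ) • K' := by
  ext i j
  fin_cases i <;> fin_cases j <;>
    norm_num [T', U', K', Ring.lie_def, Matrix.mul_apply, Fin.sum_univ_three,
      Matrix.vecHead, Matrix.vecTail, Function.comp, Matrix.cons_val_two]

lemma lieUe2 : ⁅U', e2⁆ = e1 := by
  ext i j
  fin_cases i <;> fin_cases j <;>
    norm_num [U', e1, e2, Ring.lie_def, Matrix.mul_apply, Fin.sum_univ_three,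
      Matrix.vecHead, Matrix.vecTail, Function.comp, Matrix.cons_val_two]

lemma hS_lie {x y : M3} (hx : x ∈ hS) (hy : y ∈ hS) : ⁅x, y⁆ ∈ hS := by
  obtain ⟨a1, a2, a3, a4, a5, a6, a7⟩ := hx
  obtain ⟨b1, b2, b3, b4, b5, b6, b7⟩ := hy
  refine ⟨?_, ?_, ?_, ?_, ?_, ?_, ?_⟩ <;>
    simp only [Ring.lie_def, Matrix.sub_apply, Matrix.mul_apply, Fin.sum_univ_three,
      a1, a2, a3, a4, a5, a6, a7, b1, b2, b3, b4, b5, b6, b7] <;> ring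

lemma hm_lie {x y : M3} (hx : x ∈ hS) (hy : y ∈ mS) : ⁅x, y⁆ ∈ mS := by
  obtain ⟨a1, a2, a3, a4, a5, a6, a7⟩ := hx
  obtain ⟨b1, b2, b3, b4, b5, b6⟩ := hy
  refine ⟨?_, ?_, ?_, ?_, ?_, ?_⟩ <;>
    simp only [Ring.lie_def, Matrix.sub_apply, Matrix.mul_apply, Fin.sum_univ_three,
      a1, a2, a3, a4, a5, a6, a7, b1, b2, b3, b4, b5, b6] <;> ring

lemma gS_lie {x y : M3} (hx : x ∈ gS) (hy : y ∈ gS) : ⁅x, y⁆ ∈ gS := by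
  obtain ⟨a1, a2, a3, a4⟩ := hx
  obtain ⟨b1, b2, b3, b4⟩ := hy
  refine ⟨?_, ?_, ?_, ?_⟩ <;>
    simp only [Ring.lie_def, Matrix.sub_apply, Matrix.mul_apply, Fin.sum_univ_three,
      a1, a2, a3, a4, b1, b2, b3, b4] <;> ring

def G14 : LieSubalgebra ℝ M3 := { gS with lie_mem' := fun hx hy => gS_lie hx hy }

lemma comboB (y : M3) (h2 : y 1 0 = 0) (h3 : y 2 0 = 0) :
    (-(1/6) : ℝ) • (⁅K', ⁅K', ⁅K', ⁅K', y⁆⁆⁆⁆ - ⁅K', ⁅K', ⁅K', y⁆⁆⁆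
      - (4 : ℝ) • ⁅K', ⁅K', y⁆⁆ + (4 : ℝ) • ⁅K', y⁆) = y 0 1 • e1 := by
  simp only [lieK_apply]
  ext i j
  fin_cases i <;> fin_cases j <;>
    simp [e1, two_eq, h2, h3, Matrix.smul_apply, Matrix.sub_apply, Matrix.add_apply,
      Matrix.vecHead, Matrix.vecTail, Function.comp] <;> ring

lemma comboA (y : M3) (h1 : y 0 0 = 0) (h4 : y 2 2 = -y 1 1) :
    y + (1/4 : ℝ) • ⁅K', ⁅K', ⁅K', ⁅K', y⁆⁆⁆⁆ - (5/4 : ℝ) • ⁅K', ⁅K', y⁆⁆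
      = y 1 1 • K' := by
  simp only [lieK_apply]
  ext i j
  fin_cases i <;> fin_cases j <;>
    simp [K', two_eq, h1, h4, Matrix.smul_apply, Matrix.sub_apply, Matrix.add_apply,
      Matrix.vecHead, Matrix.vecTail, Function.comp] <;> ring

end Stmt14
namespace Stmt14

attribute [local instance] LieRing.ofAssociativeRing


/-- `h` is a 2-dimensional subalgebra of `g` containing no
nonzero ideal of `g`, `m = span{e₂, T', U'}` is a reductive complement of `h`
in `g` generating `g` as a Lie algebra, and `m` is the unique subspace with
`g = h ⊕ m` and `[h, m] ⊆ m`. -/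
theorem stmt14 :
    Module.finrank ℝ h14 = 2 ∧
    (∀ x ∈ h14, ∀ y ∈ h14, ⁅x, y⁆ ∈ h14) ∧
    (∀ I : Submodule ℝ M3, I ≤ h14 → (∀ x ∈ g14, ∀ y ∈ I, ⁅x, y⁆ ∈ I) → I = ⊥) ∧
    h14 ⊔ m14 = g14 ∧ h14 ⊓ m14 = ⊥ ∧
    (∀ x ∈ h14, ∀ y ∈ m14, ⁅x, y⁆ ∈ m14) ∧
    (LieSubalgebra.lieSpan ℝ M3 (m14 : Set M3)).toSubmodule = g14 ∧
    (∀ m' : Submodule ℝ M3, h14 ⊔ m' = g14 → h14 ⊓ m' = ⊥ →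
      (∀ x ∈ h14, ∀ y ∈ m', ⁅x, y⁆ ∈ m') → m' = m14) := by
  have hK : K' ∈ h14 := Submodule.subset_span (by simp)
  have he1 : e1 ∈ h14 := Submodule.subset_span (by simp)
  have hsupm : h14 ⊔ m14 = g14 := by
    rw [h14, m14, g14, ← Submodule.span_union]
    congr 1
    ext x
    simp only [Set.mem_union, Set.mem_insert_iff, Set.mem_singleton_iff]
    tauto
  have hinfm : h14 ⊓ m14 = ⊥ := by
    rw [h14_eq, m14_eq, eq_bot_iff]
    rintro x ⟨⟨a1, a2, a3, a4, a5, a6, a7⟩, ⟨b1, b2, b3, b4, b5, b6⟩⟩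
    rw [Submodule.mem_bot]
    ext i j
    fin_cases i <;> fin_cases j <;>
      simp [a1, a2, a3, a4, a5, a6, a7, b1, b2, b3, b4, b5, b6, two_eq]
  refine ⟨?_, ?_, ?_, hsupm, hinfm, ?_, ?_, ?_⟩
  · -- finrank
    have hr : Set.range ![K', e1] = {K', e1} := by
      ext x
      simp [Fin.exists_fin_two]
      tauto
    have hli : LinearIndependent ℝ ![K', e1] := by
      apply linearIndependent_fin2.mpr
      refine ⟨?_, ?_⟩
      · intro h
        have := congrFun (congrFun h 0) 1
        simp [e1, Matrix.zero_apply] at this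
      · intro a h
        have := congrFun (congrFun h 1) 1
        simp [e1, K', Matrix.smul_apply, Matrix.vecHead, Matrix.vecTail] at this
    rw [h14, ← hr, finrank_span_eq_card hli]
    simp
  · -- subalgebra
    intro x hx y hy
    rw [h14_eq] at hx hy ⊢
    exact hS_lie hx hy
  · -- no ideals
    intro I hIh hbr
    rw [eq_bot_iff]
    intro y hy
    have hyh : y ∈ hS := by rw [← h14_eq]; exact hIh hy
    obtain ⟨a1, a2, a3, a4, a5, a6, a7⟩ := hyh
    have hT : T' ∈ g14 := Submodule.subset_span (by simp)
    have hb : ⁅T', y⁆ ∈ hS := by rw [← h14_eq]; exact hIh (hbr T' hT y hy)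
    rw [lieT_apply] at hb
    obtain ⟨c1, c2, c3, c4, c5, c6, c7⟩ := hb
    simp [Matrix.vecHead, Matrix.vecTail, two_eq] at c2 c4
    -- c4 : y 2 2 - y 1 1 = 0, a7 : y 2 2 = -y 1 1 ⇒ y 1 1 = 0 ; c2 : y 0 1 = 0
    have h11 : y 1 1 = 0 := by rw [a7] at c4; linarith
    rw [Submodule.mem_bot]
    ext i j
    fin_cases i <;> fin_cases j <;>
      simp [a1, a2, a3, a4, a5, a6, a7, c2, h11, two_eq]
  · -- [h,m] ⊆ m
    intro x hx y hy
    rw [h14_eq] at hx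
    rw [m14_eq] at hy ⊢
    exact hm_lie hx hy
  · -- lieSpan m = g
    have hmg : m14 ≤ g14 := by
      rw [m14, g14]
      apply Submodule.span_mono
      intro x hx
      simp only [Set.mem_insert_iff, Set.mem_singleton_iff] at hx ⊢
      tauto
    apply le_antisymm
    · have hle : LieSubalgebra.lieSpan ℝ M3 (m14 : Set M3) ≤ G14 := by
        rw [LieSubalgebra.lieSpan_le]
        intro x hx
        have : x ∈ gS := by rw [← g14_eq]; exact hmg hx
        exact this
      intro x hx
      rw [g14_eq]
      exact hle hx
    · rw [g14, Submodule.span_le]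
      have hT : T' ∈ LieSubalgebra.lieSpan ℝ M3 (m14 : Set M3) :=
        LieSubalgebra.subset_lieSpan (Submodule.subset_span (by simp))
      have hU : U' ∈ LieSubalgebra.lieSpan ℝ M3 (m14 : Set M3) :=
        LieSubalgebra.subset_lieSpan (Submodule.subset_span (by simp))
      have he2' : e2 ∈ LieSubalgebra.lieSpan ℝ M3 (m14 : Set M3) :=
        LieSubalgebra.subset_lieSpan (Submodule.subset_span (by simp))
      have hKs : K' ∈ LieSubalgebra.lieSpan ℝ M3 (m14 : Set M3) := by
        have hEq : K' = (-(1/2) : ℝ) • ⁅T', U'⁆ := by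
          rw [lieTU, smul_smul]; norm_num
        have hTU : ⁅T', U'⁆ ∈ (LieSubalgebra.lieSpan ℝ M3 (m14 : Set M3)).toSubmodule :=
          LieSubalgebra.lie_mem _ hT hU
        have : K' ∈ (LieSubalgebra.lieSpan ℝ M3 (m14 : Set M3)).toSubmodule := by
          rw [hEq]
          exact Submodule.smul_mem _ _ hTU
        exact this
      have he1' : e1 ∈ LieSubalgebra.lieSpan ℝ M3 (m14 : Set M3) := by
        rw [← lieUe2]
        exact LieSubalgebra.lie_mem _ hU he2'
      rintro x hx
      simp only [Set.mem_insert_iff, Set.mem_singleton_iff] at hx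
      rcases hx with rfl | rfl | rfl | rfl | rfl <;> assumption
  · -- uniqueness
    intro m' hsup hinf hbr
    have hsub : m' ≤ m14 := by
      intro y hy
      have hyg : y ∈ gS := by
        rw [← g14_eq, ← hsup]
        exact Submodule.mem_sup_right hy
      obtain ⟨c1, c2, c3, c4⟩ := hyg
      have k1 : ⁅K', y⁆ ∈ m' := hbr K' hK y hy
      have k2 : ⁅K', ⁅K', y⁆⁆ ∈ m' := hbr K' hK _ k1
      have k3 : ⁅K', ⁅K', ⁅K', y⁆⁆⁆ ∈ m' := hbr K' hK _ k2
      have k4 : ⁅K', ⁅K', ⁅K', ⁅K', y⁆⁆⁆⁆ ∈ m' := hbr K' hK _ k3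
      have hB : (y 0 1) • e1 ∈ m' := by
        rw [← comboB y c2 c3]
        exact Submodule.smul_mem _ _ (Submodule.add_mem _ (Submodule.sub_mem _
          (Submodule.sub_mem _ k4 k3) (Submodule.smul_mem _ _ k2))
          (Submodule.smul_mem _ _ k1))
      have hb0 : y 0 1 = 0 := by
        have hmem : (y 0 1) • e1 ∈ h14 ⊓ m' := ⟨Submodule.smul_mem _ _ he1, hB⟩
        rw [hinf, Submodule.mem_bot] at hmem
        have := congrFun (congrFun hmem 0) 1
        simpa [e1, Matrix.smul_apply] using this
      have hA : (y 1 1) • K' ∈ m' := by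
        rw [← comboA y c1 c4]
        exact Submodule.sub_mem _ (Submodule.add_mem _ hy (Submodule.smul_mem _ _ k4))
          (Submodule.smul_mem _ _ k2)
      have ha0 : y 1 1 = 0 := by
        have hmem : (y 1 1) • K' ∈ h14 ⊓ m' := ⟨Submodule.smul_mem _ _ hK, hA⟩
        rw [hinf, Submodule.mem_bot] at hmem
        have := congrFun (congrFun hmem 1) 1
        simpa [K', Matrix.smul_apply, Matrix.vecHead, Matrix.vecTail] using this
      rw [m14_eq]
      exact ⟨c1, hb0, c2, ha0, c3, by rw [c4, ha0]; ring⟩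
    refine le_antisymm hsub ?_
    intro z hz
    have hzg : z ∈ h14 ⊔ m' := by
      rw [hsup, ← hsupm]
      exact Submodule.mem_sup_right hz
    obtain ⟨u, hu, v, hv, huv⟩ := Submodule.mem_sup.mp hzg
    have hv14 : v ∈ m14 := hsub hv
    have hu0 : u ∈ h14 ⊓ m14 := by
      refine ⟨hu, ?_⟩
      have : u = z - v := by rw [← huv]; abel
      rw [this]
      exact Submodule.sub_mem _ hz hv14
    rw [hinfm, Submodule.mem_bot] at hu0
    rw [← huv, hu0, zero_add]
    exact hv


end Stmt14
end

section
/- Let g be the 6-dimensional real Lie algebra with basis e₁,…,e₆ and brackets [e₁,e₂]=e₆, [e₁,e₃]=e₅, [e₂,e₃]=e₄, [e₅,e₄]=−e₆, [e₂,e₆]=−e₁, [e₃,e₅]=−e₁, [e₂,e₄]=e₃, [e₃,e₄]=−e₂, [e₆,e₄]=e₅, and [e₁,e₄]=[e₁,e₅]=[e₁,e₆]=[e₂,e₅]=[e₃,e₆]=[e₅,e₆]=0. Each of the following pairs (h, m) satisfies g = h ⊕ m as vector spaces, [h, m] ⊆ m, and m generates g as a Lie algebra: (i) h = span{e₁,e₂,e₆}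 and m = span{e₅, e₃ − b₃e₁ − b₂e₆, e₄ + b₂e₁ + b₃e₆} for all b₂,b₃ ∈ ℝ; (ii) h = span{e₂,e₃,e₄} and m = span{e₁ + a·e₄, e₆ − a·e₃, e₅ + a·e₂} for all a ∈ ℝ with a ≠ 0; (iii) h = span{e₄,e₅,e₆} and m = span{e₁, e₂ + b₁e₆ + b₂e₅, e₃ − b₂e₆ + b₁e₅} for all b₁,b₂ ∈ ℝ. -/
theorem memt {M : Type*} [AddCommGroup M] [Module ℝ M] (a b c x : M) :
    x ∈ Submodule.span ℝ ({a,b,c} : Set M) ↔ ∃ r s t : ℝ, r•a+s•b+t•c = x := by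
  simp only [Submodule.mem_span_insert, Submodule.mem_span_singleton]
  constructor
  · rintro ⟨r, z, ⟨s, w, ⟨t, rfl⟩, rfl⟩, rfl⟩; exact ⟨r, s, t, by abel⟩
  · rintro ⟨r, s, t, rfl⟩; exact ⟨r, _, ⟨s, _, ⟨t, rfl⟩, rfl⟩, by abel⟩

theorem brk {L : Type*} [LieRing L] [LieAlgebra ℝ L] (S T : Set L)
    (h : ∀ x ∈ S, ∀ y ∈ T, ⁅x,y⁆ ∈ Submodule.span ℝ T) :
    ∀ x ∈ Submodule.span ℝ S, ∀ y ∈ Submodule.span ℝ T, ⁅x,y⁆ ∈ Submodule.span ℝ T := by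
  intro x hx
  induction hx using Submodule.span_induction with
  | mem x hxS =>
    intro y hy
    induction hy using Submodule.span_induction with
    | mem y hyT => exact h x hxS y hyT
    | zero => simp
    | add y z _ _ hy hz => rw [lie_add]; exact add_mem hy hz
    | smul r y _ hy => rw [lie_smul]; exact Submodule.smul_mem _ _ hy
  | zero => intro y hy; simp
  | add x z _ _ hx hz => intro y hy; rw [add_lie]; exact add_mem (hx y hy) (hz y hy)
  | smul r x _ hx => intro y hy; rw [smul_lie]; exact Submodule.smul_mem _ _ (hx y hy)

/-- in the 6-dimensional real Lie algebra `g ≅ sl₂(ℝ) ⋉ ℝ³` with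
basis `e₁, …, e₆` and the given structure constants, each of the three listed
pairs `(h, m)` satisfies `g = h ⊕ m`, `[h, m] ⊆ m`, and `m` generates `g` as a
Lie algebra. -/
theorem stmt16 (L : Type*) [LieRing L] [LieAlgebra ℝ L]
    (e1 e2 e3 e4 e5 e6 : L)
    (hindep : LinearIndependent ℝ ![e1, e2, e3, e4, e5, e6])
    (hspan : Submodule.span ℝ {e1, e2, e3, e4, e5, e6} = (⊤ : Submodule ℝ L))
    (h12 : ⁅e1, e2⁆ = e6) (h13 : ⁅e1, e3⁆ = e5) (h23 : ⁅e2, e3⁆ = e4)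
    (h54 : ⁅e5, e4⁆ = -e6) (h26 : ⁅e2, e6⁆ = -e1) (h35 : ⁅e3, e5⁆ = -e1)
    (h24 : ⁅e2, e4⁆ = e3) (h34 : ⁅e3, e4⁆ = -e2) (h64 : ⁅e6, e4⁆ = e5)
    (h14 : ⁅e1, e4⁆ = 0) (h15 : ⁅e1, e5⁆ = 0) (h16 : ⁅e1, e6⁆ = 0)
    (h25 : ⁅e2, e5⁆ = 0) (h36 : ⁅e3, e6⁆ = 0) (h56 : ⁅e5, e6⁆ = 0) :
    (∀ b2 b3 : ℝ,
      Submodule.span ℝ {e1, e2, e6} ⊔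
        Submodule.span ℝ {e5, e3 - b3 • e1 - b2 • e6, e4 + b2 • e1 + b3 • e6}
        = ⊤ ∧
      Submodule.span ℝ {e1, e2, e6} ⊓
        Submodule.span ℝ {e5, e3 - b3 • e1 - b2 • e6, e4 + b2 • e1 + b3 • e6}
        = ⊥ ∧
      (∀ x ∈ Submodule.span ℝ {e1, e2, e6},
        ∀ y ∈ Submodule.span ℝ
          {e5, e3 - b3 • e1 - b2 • e6, e4 + b2 • e1 + b3 • e6},
        ⁅x, y⁆ ∈ Submodule.span ℝ
          {e5, e3 - b3 • e1 - b2 • e6, e4 + b2 • e1 + b3 • e6}) ∧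
      (LieSubalgebra.lieSpan ℝ L
        ({e5, e3 - b3 • e1 - b2 • e6, e4 + b2 • e1 + b3 • e6} : Set L)).toSubmodule
        = ⊤) ∧
    (∀ a : ℝ, a ≠ 0 →
      Submodule.span ℝ {e2, e3, e4} ⊔
        Submodule.span ℝ {e1 + a • e4, e6 - a • e3, e5 + a • e2} = ⊤ ∧
      Submodule.span ℝ {e2, e3, e4} ⊓
        Submodule.span ℝ {e1 + a • e4, e6 - a • e3, e5 + a • e2} = ⊥ ∧
      (∀ x ∈ Submodule.span ℝ {e2, e3, e4},
        ∀ y ∈ Submodule.span ℝ {e1 + a • e4, e6 - a • e3, e5 + a • e2},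
        ⁅x, y⁆ ∈ Submodule.span ℝ {e1 + a • e4, e6 - a • e3, e5 + a • e2}) ∧
      (LieSubalgebra.lieSpan ℝ L
        ({e1 + a • e4, e6 - a • e3, e5 + a • e2} : Set L)).toSubmodule = ⊤) ∧
    (∀ b1 b2 : ℝ,
      Submodule.span ℝ {e4, e5, e6} ⊔
        Submodule.span ℝ
          {e1, e2 + b1 • e6 + b2 • e5, e3 - b2 • e6 + b1 • e5} = ⊤ ∧
      Submodule.span ℝ {e4, e5, e6} ⊓
        Submodule.span ℝ
          {e1, e2 + b1 • e6 + b2 • e5, e3 - b2 • e6 + b1 • e5} = ⊥ ∧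
      (∀ x ∈ Submodule.span ℝ {e4, e5, e6},
        ∀ y ∈ Submodule.span ℝ
          {e1, e2 + b1 • e6 + b2 • e5, e3 - b2 • e6 + b1 • e5},
        ⁅x, y⁆ ∈ Submodule.span ℝ
          {e1, e2 + b1 • e6 + b2 • e5, e3 - b2 • e6 + b1 • e5}) ∧
      (LieSubalgebra.lieSpan ℝ L
        ({e1, e2 + b1 • e6 + b2 • e5, e3 - b2 • e6 + b1 • e5} : Set L)).toSubmodule
        = ⊤) := by
  -- reversed brackets
  have h21 : ⁅e2, e1⁆ = -e6 := by rw [← lie_skew, h12]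
  have h31 : ⁅e3, e1⁆ = -e5 := by rw [← lie_skew, h13]
  have h32 : ⁅e3, e2⁆ = -e4 := by rw [← lie_skew, h23]
  have h45 : ⁅e4, e5⁆ = e6 := by rw [← lie_skew, h54, neg_neg]
  have h62 : ⁅e6, e2⁆ = e1 := by rw [← lie_skew, h26, neg_neg]
  have h53 : ⁅e5, e3⁆ = e1 := by rw [← lie_skew, h35, neg_neg]
  have h42 : ⁅e4, e2⁆ = -e3 := by rw [← lie_skew, h24]
  have h43 : ⁅e4, e3⁆ = e2 := by rw [← lie_skew, h34, neg_neg]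
  have h46 : ⁅e4, e6⁆ = -e5 := by rw [← lie_skew, h64]
  have h41 : ⁅e4, e1⁆ = 0 := by rw [← lie_skew, h14, neg_zero]
  have h51 : ⁅e5, e1⁆ = 0 := by rw [← lie_skew, h15, neg_zero]
  have h61 : ⁅e6, e1⁆ = 0 := by rw [← lie_skew, h16, neg_zero]
  have h52 : ⁅e5, e2⁆ = 0 := by rw [← lie_skew, h25, neg_zero]
  have h63 : ⁅e6, e3⁆ = 0 := by rw [← lie_skew, h36, neg_zero]
  have h65 : ⁅e6, e5⁆ = 0 := by rw [← lie_skew, h56, neg_zero]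
  have key : ∀ c1 c2 c3 c4 c5 c6 : ℝ,
      c1•e1+c2•e2+c3•e3+c4•e4+c5•e5+c6•e6 = 0 →
      c1=0 ∧ c2=0 ∧ c3=0 ∧ c4=0 ∧ c5=0 ∧ c6=0 := by
    intro c1 c2 c3 c4 c5 c6 h
    have k := Fintype.linearIndependent_iff.mp hindep ![c1,c2,c3,c4,c5,c6] ?_
    · exact ⟨k 0, k 1, k 2, k 3, k 4, k 5⟩
    · simpa [Fin.sum_univ_six] using h
  refine ⟨?_, ?_, ?_⟩
  · -- Case (i)
    intro b2 b3
    set m1 := e5 with hm1d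
    set m2 := e3 - b3 • e1 - b2 • e6 with hm2d
    set m3 := e4 + b2 • e1 + b3 • e6 with hm3d
    refine ⟨?_, ?_, ?_, ?_⟩
    · rw [eq_top_iff, ← hspan, Submodule.span_le]
      intro x hx
      simp only [Set.mem_insert_iff, Set.mem_singleton_iff] at hx
      have q1 : e1 ∈ Submodule.span ℝ ({e1,e2,e6}:Set L) ⊔ Submodule.span ℝ ({m1,m2,m3}:Set L) :=
        Submodule.mem_sup_left (Submodule.subset_span (by simp))
      have q2 : e2 ∈ Submodule.span ℝ ({e1,e2,e6}:Set L) ⊔ Submodule.span ℝ ({m1,m2,m3}:Set L) :=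
        Submodule.mem_sup_left (Submodule.subset_span (by simp))
      have q6 : e6 ∈ Submodule.span ℝ ({e1,e2,e6}:Set L) ⊔ Submodule.span ℝ ({m1,m2,m3}:Set L) :=
        Submodule.mem_sup_left (Submodule.subset_span (by simp))
      have q5 : m1 ∈ Submodule.span ℝ ({e1,e2,e6}:Set L) ⊔ Submodule.span ℝ ({m1,m2,m3}:Set L) :=
        Submodule.mem_sup_right (Submodule.subset_span (by simp))
      have qm2 : m2 ∈ Submodule.span ℝ ({e1,e2,e6}:Set L) ⊔ Submodule.span ℝ ({m1,m2,m3}:Set L) :=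
        Submodule.mem_sup_right (Submodule.subset_span (by simp))
      have qm3 : m3 ∈ Submodule.span ℝ ({e1,e2,e6}:Set L) ⊔ Submodule.span ℝ ({m1,m2,m3}:Set L) :=
        Submodule.mem_sup_right (Submodule.subset_span (by simp))
      rcases hx with rfl|rfl|rfl|rfl|rfl|rfl
      · exact q1
      · exact q2
      · have h3 : x = m2 + b3 • e1 + b2 • e6 := by rw [hm2d]; module
        rw [h3]
        exact add_mem (add_mem qm2 (Submodule.smul_mem _ _ q1)) (Submodule.smul_mem _ _ q6)
      · have h4 : x = m3 - b2 • e1 - b3 • e6 := by rw [hm3d]; module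
        rw [h4]
        exact sub_mem (sub_mem qm3 (Submodule.smul_mem _ _ q1)) (Submodule.smul_mem _ _ q6)
      · exact q5
      · exact q6
    · rw [eq_bot_iff]
      intro x hx
      rw [Submodule.mem_inf] at hx
      obtain ⟨hxH, hxM⟩ := hx
      rw [memt] at hxH hxM
      obtain ⟨p, q, r, hx1⟩ := hxH
      obtain ⟨u, v, w, hx2⟩ := hxM
      have heq : p•e1+q•e2+r•e6 = u•m1+v•m2+w•m3 := hx1.trans hx2.symm
      rw [hm1d, hm2d, hm3d] at heq
      have hz : (p + v*b3 - w*b2)•e1 + q•e2 + (-v)•e3 + (-w)•e4 + (-u)•e5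
          + (r + v*b2 - w*b3)•e6 = 0 := by
        linear_combination (norm := module) heq
      obtain ⟨k1, k2, k3, k4, k5, k6⟩ := key _ _ _ _ _ _ hz
      have hv : v = 0 := by linarith
      have hw : w = 0 := by linarith
      have hu : u = 0 := by linarith
      have hp : p = 0 := by rw [hv, hw] at k1; linarith
      have hr : r = 0 := by rw [hv, hw] at k6; linarith
      rw [Submodule.mem_bot, ← hx1, hp, k2, hr]
      simp
    · intro x hx y hy
      refine brk _ _ ?_ x hx y hy
      intro x' hx' y' hy'
      simp only [Set.mem_insert_iff, Set.mem_singleton_iff] at hx' hy'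
      rw [hm1d, hm2d, hm3d] at hy' ⊢
      rcases hx' with rfl|rfl|rfl <;> rcases hy' with rfl|rfl|rfl <;>
        refine (memt _ _ _ _).mpr ?_
      · exact ⟨0, 0, 0, by rw [← hm1d]; simp [h15]⟩
      · exact ⟨1, 0, 0, by
          simp only [lie_sub, lie_smul, lie_self, h13, h16]
          module⟩
      · exact ⟨0, 0, 0, by
          simp only [lie_add, lie_smul, lie_self, h14, h16]
          module⟩
      · exact ⟨0, 0, 0, by rw [← hm1d]; simp [h25]⟩
      · exact ⟨0, 0, 1, by
          simp only [lie_sub, lie_smul, h23, h21, h26]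
          module⟩
      · exact ⟨0, 1, 0, by
          simp only [lie_add, lie_smul, h24, h21, h26]
          module⟩
      · exact ⟨0, 0, 0, by rw [← hm1d]; simp [h65]⟩
      · exact ⟨0, 0, 0, by
          simp only [lie_sub, lie_smul, lie_self, h63, h61]
          module⟩
      · exact ⟨1, 0, 0, by
          simp only [lie_add, lie_smul, lie_self, h64, h61]
          module⟩
    · set K := LieSubalgebra.lieSpan ℝ L ({m1, m2, m3} : Set L) with hK
      have km1 : m1 ∈ K := LieSubalgebra.subset_lieSpan (by simp)
      have km2 : m2 ∈ K := LieSubalgebra.subset_lieSpan (by simp)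
      have km3 : m3 ∈ K := LieSubalgebra.subset_lieSpan (by simp)
      have ke1 : e1 ∈ K := by
        have hb : ⁅m1, m2⁆ = e1 := by
          rw [hm2d]
          simp only [lie_sub, lie_smul, h53, h51, h56]
          module
        exact hb ▸ K.lie_mem km1 km2
      have ke6 : e6 ∈ K := by
        have hb : e6 = -⁅m1, m3⁆ := by
          rw [hm3d]
          simp only [lie_add, lie_smul, h54, h51, h56]
          module
        rw [hb]; exact neg_mem (K.lie_mem km1 km3)
      have ke3 : e3 ∈ K := by
        have h3 : e3 = m2 + b3 • e1 + b2 • e6 := by rw [hm2d]; module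
        rw [h3]
        exact add_mem (add_mem km2 (K.smul_mem _ ke1)) (K.smul_mem _ ke6)
      have ke4 : e4 ∈ K := by
        have h4 : e4 = m3 - b2 • e1 - b3 • e6 := by rw [hm3d]; module
        rw [h4]
        exact sub_mem (sub_mem km3 (K.smul_mem _ ke1)) (K.smul_mem _ ke6)
      have ke2 : e2 ∈ K := by
        have hb : e2 = -⁅e3, e4⁆ := by rw [h34, neg_neg]
        rw [hb]; exact neg_mem (K.lie_mem ke3 ke4)
      have ke5 : e5 ∈ K := km1
      rw [eq_top_iff, ← hspan, Submodule.span_le]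
      intro x hx
      simp only [Set.mem_insert_iff, Set.mem_singleton_iff] at hx
      rcases hx with rfl|rfl|rfl|rfl|rfl|rfl <;>
        simpa using ‹_ ∈ K›
  · -- Case (ii)
    intro a ha
    set m1 := e1 + a • e4 with hm1d
    set m2 := e6 - a • e3 with hm2d
    set m3 := e5 + a • e2 with hm3d
    refine ⟨?_, ?_, ?_, ?_⟩
    · rw [eq_top_iff, ← hspan, Submodule.span_le]
      intro x hx
      simp only [Set.mem_insert_iff, Set.mem_singleton_iff] at hx
      have q2 : e2 ∈ Submodule.span ℝ ({e2,e3,e4}:Set L) ⊔ Submodule.span ℝ ({m1,m2,m3}:Set L) :=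
        Submodule.mem_sup_left (Submodule.subset_span (by simp))
      have q3 : e3 ∈ Submodule.span ℝ ({e2,e3,e4}:Set L) ⊔ Submodule.span ℝ ({m1,m2,m3}:Set L) :=
        Submodule.mem_sup_left (Submodule.subset_span (by simp))
      have q4 : e4 ∈ Submodule.span ℝ ({e2,e3,e4}:Set L) ⊔ Submodule.span ℝ ({m1,m2,m3}:Set L) :=
        Submodule.mem_sup_left (Submodule.subset_span (by simp))
      have qm1 : m1 ∈ Submodule.span ℝ ({e2,e3,e4}:Set L) ⊔ Submodule.span ℝ ({m1,m2,m3}:Set L) :=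
        Submodule.mem_sup_right (Submodule.subset_span (by simp))
      have qm2 : m2 ∈ Submodule.span ℝ ({e2,e3,e4}:Set L) ⊔ Submodule.span ℝ ({m1,m2,m3}:Set L) :=
        Submodule.mem_sup_right (Submodule.subset_span (by simp))
      have qm3 : m3 ∈ Submodule.span ℝ ({e2,e3,e4}:Set L) ⊔ Submodule.span ℝ ({m1,m2,m3}:Set L) :=
        Submodule.mem_sup_right (Submodule.subset_span (by simp))
      rcases hx with rfl|rfl|rfl|rfl|rfl|rfl
      · have h1 : x = m1 - a • e4 := by rw [hm1d]; module
        rw [h1]; exact sub_mem qm1 (Submodule.smul_mem _ _ q4)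
      · exact q2
      · exact q3
      · exact q4
      · have h5 : x = m3 - a • e2 := by rw [hm3d]; module
        rw [h5]; exact sub_mem qm3 (Submodule.smul_mem _ _ q2)
      · have h6 : x = m2 + a • e3 := by rw [hm2d]; module
        rw [h6]; exact add_mem qm2 (Submodule.smul_mem _ _ q3)
    · rw [eq_bot_iff]
      intro x hx
      rw [Submodule.mem_inf] at hx
      obtain ⟨hxH, hxM⟩ := hx
      rw [memt] at hxH hxM
      obtain ⟨p, q, r, hx1⟩ := hxH
      obtain ⟨u, v, w, hx2⟩ := hxM
      have heq : p•e2+q•e3+r•e4 = u•m1+v•m2+w•m3 := hx1.trans hx2.symm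
      rw [hm1d, hm2d, hm3d] at heq
      have hz : (-u)•e1 + (p - w*a)•e2 + (q + v*a)•e3 + (r - u*a)•e4 + (-w)•e5
          + (-v)•e6 = 0 := by
        linear_combination (norm := module) heq
      obtain ⟨k1, k2, k3, k4, k5, k6⟩ := key _ _ _ _ _ _ hz
      have hu : u = 0 := by linarith
      have hw : w = 0 := by linarith
      have hv : v = 0 := by linarith
      have hp : p = 0 := by rw [hw] at k2; linarith
      have hq : q = 0 := by rw [hv] at k3; linarith
      have hr : r = 0 := by rw [hu] at k4; linarith
      rw [Submodule.mem_bot, ← hx1, hp, hq, hr]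
      simp
    · intro x hx y hy
      refine brk _ _ ?_ x hx y hy
      intro x' hx' y' hy'
      simp only [Set.mem_insert_iff, Set.mem_singleton_iff] at hx' hy'
      rw [hm1d, hm2d, hm3d] at hy' ⊢
      rcases hx' with rfl|rfl|rfl <;> rcases hy' with rfl|rfl|rfl <;>
        refine (memt _ _ _ _).mpr ?_
      · exact ⟨0, -1, 0, by
          simp only [lie_add, lie_smul, h21, h24]
          module⟩
      · exact ⟨-1, 0, 0, by
          simp only [lie_sub, lie_smul, h26, h23]
          module⟩
      · exact ⟨0, 0, 0, by
          simp only [lie_add, lie_smul, lie_self, h25]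
          module⟩
      · exact ⟨0, 0, -1, by
          simp only [lie_add, lie_smul, h31, h34]
          module⟩
      · exact ⟨0, 0, 0, by
          simp only [lie_sub, lie_smul, lie_self, h36]
          module⟩
      · exact ⟨-1, 0, 0, by
          simp only [lie_add, lie_smul, h35, h32]
          module⟩
      · exact ⟨0, 0, 0, by
          simp only [lie_add, lie_smul, lie_self, h41]
          module⟩
      · exact ⟨0, 0, -1, by
          simp only [lie_sub, lie_smul, h46, h43]
          module⟩
      · exact ⟨0, 1, 0, by
          simp only [lie_add, lie_smul, h45, h42]
          module⟩
    · set K := LieSubalgebra.lieSpan ℝ L ({m1, m2, m3} : Set L) with hK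
      have km1 : m1 ∈ K := LieSubalgebra.subset_lieSpan (by simp)
      have km2 : m2 ∈ K := LieSubalgebra.subset_lieSpan (by simp)
      have km3 : m3 ∈ K := LieSubalgebra.subset_lieSpan (by simp)
      have hinv : ∀ z : L, z = a⁻¹ • (a • z) := by
        intro z; rw [smul_smul, inv_mul_cancel₀ ha, one_smul]
      have ke5 : e5 ∈ K := by
        have hb : a • e5 = -⁅m1, m2⁆ - a • m3 := by
          rw [hm1d, hm2d, hm3d]
          simp only [lie_sub, lie_add, sub_lie, add_lie, lie_smul, smul_lie,
            h16, h13, h46, h43]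
          module
        rw [hinv e5, hb]
        exact K.smul_mem _
          (sub_mem (neg_mem (K.lie_mem km1 km2)) (K.smul_mem _ km3))
      have ke2 : e2 ∈ K := by
        have hb : a • e2 = m3 - e5 := by rw [hm3d]; module
        rw [hinv e2, hb]
        exact K.smul_mem _ (sub_mem km3 ke5)
      have ke6 : e6 ∈ K := by
        have hb : a • e6 = ⁅m1, m3⁆ - a • m2 := by
          rw [hm1d, hm2d, hm3d]
          simp only [lie_add, add_lie, lie_smul, smul_lie, h15, h12, h45, h42]
          module
        rw [hinv e6, hb]
        exact K.smul_mem _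
          (sub_mem (K.lie_mem km1 km3) (K.smul_mem _ km2))
      have ke3 : e3 ∈ K := by
        have hb : a • e3 = e6 - m2 := by rw [hm2d]; module
        rw [hinv e3, hb]
        exact K.smul_mem _ (sub_mem ke6 km2)
      have ke1 : e1 ∈ K := by
        have hb : a • e1 = ⁅m2, m3⁆ - a • m1 := by
          rw [hm1d, hm2d, hm3d]
          simp only [lie_add, sub_lie, lie_smul, smul_lie, h65, h62, h35, h32]
          module
        rw [hinv e1, hb]
        exact K.smul_mem _
          (sub_mem (K.lie_mem km2 km3) (K.smul_mem _ km1))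
      have ke4 : e4 ∈ K := by
        have hb : a • e4 = m1 - e1 := by rw [hm1d]; module
        rw [hinv e4, hb]
        exact K.smul_mem _ (sub_mem km1 ke1)
      rw [eq_top_iff, ← hspan, Submodule.span_le]
      intro x hx
      simp only [Set.mem_insert_iff, Set.mem_singleton_iff] at hx
      rcases hx with rfl|rfl|rfl|rfl|rfl|rfl <;>
        simpa using ‹_ ∈ K›
  · -- Case (iii)
    intro b1 b2
    set m1 := e1 with hm1d
    set m2 := e2 + b1 • e6 + b2 • e5 with hm2d
    set m3 := e3 - b2 • e6 + b1 • e5 with hm3d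
    refine ⟨?_, ?_, ?_, ?_⟩
    · rw [eq_top_iff, ← hspan, Submodule.span_le]
      intro x hx
      simp only [Set.mem_insert_iff, Set.mem_singleton_iff] at hx
      have q4 : e4 ∈ Submodule.span ℝ ({e4,e5,e6}:Set L) ⊔ Submodule.span ℝ ({m1,m2,m3}:Set L) :=
        Submodule.mem_sup_left (Submodule.subset_span (by simp))
      have q5 : e5 ∈ Submodule.span ℝ ({e4,e5,e6}:Set L) ⊔ Submodule.span ℝ ({m1,m2,m3}:Set L) :=
        Submodule.mem_sup_left (Submodule.subset_span (by simp))
      have q6 : e6 ∈ Submodule.span ℝ ({e4,e5,e6}:Set L) ⊔ Submodule.span ℝ ({m1,m2,m3}:Set L) :=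
        Submodule.mem_sup_left (Submodule.subset_span (by simp))
      have qm1 : m1 ∈ Submodule.span ℝ ({e4,e5,e6}:Set L) ⊔ Submodule.span ℝ ({m1,m2,m3}:Set L) :=
        Submodule.mem_sup_right (Submodule.subset_span (by simp))
      have qm2 : m2 ∈ Submodule.span ℝ ({e4,e5,e6}:Set L) ⊔ Submodule.span ℝ ({m1,m2,m3}:Set L) :=
        Submodule.mem_sup_right (Submodule.subset_span (by simp))
      have qm3 : m3 ∈ Submodule.span ℝ ({e4,e5,e6}:Set L) ⊔ Submodule.span ℝ ({m1,m2,m3}:Set L) :=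
        Submodule.mem_sup_right (Submodule.subset_span (by simp))
      rcases hx with rfl|rfl|rfl|rfl|rfl|rfl
      · exact qm1
      · have h2 : x = m2 - b1 • e6 - b2 • e5 := by rw [hm2d]; module
        rw [h2]
        exact sub_mem (sub_mem qm2 (Submodule.smul_mem _ _ q6)) (Submodule.smul_mem _ _ q5)
      · have h3 : x = m3 + b2 • e6 - b1 • e5 := by rw [hm3d]; module
        rw [h3]
        exact sub_mem (add_mem qm3 (Submodule.smul_mem _ _ q6)) (Submodule.smul_mem _ _ q5)
      · exact q4
      · exact q5
      · exact q6
    · rw [eq_bot_iff]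
      intro x hx
      rw [Submodule.mem_inf] at hx
      obtain ⟨hxH, hxM⟩ := hx
      rw [memt] at hxH hxM
      obtain ⟨p, q, r, hx1⟩ := hxH
      obtain ⟨u, v, w, hx2⟩ := hxM
      have heq : p•e4+q•e5+r•e6 = u•m1+v•m2+w•m3 := hx1.trans hx2.symm
      rw [hm1d, hm2d, hm3d] at heq
      have hz : (-u)•e1 + (-v)•e2 + (-w)•e3 + p•e4 + (q - v*b2 - w*b1)•e5
          + (r - v*b1 + w*b2)•e6 = 0 := by
        linear_combination (norm := module) heq
      obtain ⟨k1, k2, k3, k4, k5, k6⟩ := key _ _ _ _ _ _ hz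
      have hu : u = 0 := by linarith
      have hv : v = 0 := by linarith
      have hw : w = 0 := by linarith
      have hq : q = 0 := by rw [hv, hw] at k5; linarith
      have hr : r = 0 := by rw [hv, hw] at k6; linarith
      rw [Submodule.mem_bot, ← hx1, k4, hq, hr]
      simp
    · intro x hx y hy
      refine brk _ _ ?_ x hx y hy
      intro x' hx' y' hy'
      simp only [Set.mem_insert_iff, Set.mem_singleton_iff] at hx' hy'
      rw [hm1d, hm2d, hm3d] at hy' ⊢
      rcases hx' with rfl|rfl|rfl <;> rcases hy' with rfl|rfl|rfl <;>
        refine (memt _ _ _ _).mpr ?_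
      · exact ⟨0, 0, 0, by rw [← hm1d]; simp [h41]⟩
      · exact ⟨0, 0, -1, by
          simp only [lie_add, lie_smul, h42, h46, h45]
          module⟩
      · exact ⟨0, 1, 0, by
          simp only [lie_sub, lie_add, lie_smul, h43, h46, h45]
          module⟩
      · exact ⟨0, 0, 0, by rw [← hm1d]; simp [h51]⟩
      · exact ⟨0, 0, 0, by
          simp only [lie_add, lie_smul, lie_self, h52, h56]
          module⟩
      · exact ⟨1, 0, 0, by
          simp only [lie_sub, lie_add, lie_smul, lie_self, h53, h56]
          module⟩
      · exact ⟨0, 0, 0, by rw [← hm1d]; simp [h61]⟩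
      · exact ⟨1, 0, 0, by
          simp only [lie_add, lie_smul, lie_self, h62, h65]
          module⟩
      · exact ⟨0, 0, 0, by
          simp only [lie_sub, lie_add, lie_smul, lie_self, h63, h65]
          module⟩
    · set K := LieSubalgebra.lieSpan ℝ L ({m1, m2, m3} : Set L) with hK
      have km1 : m1 ∈ K := LieSubalgebra.subset_lieSpan (by simp)
      have km2 : m2 ∈ K := LieSubalgebra.subset_lieSpan (by simp)
      have km3 : m3 ∈ K := LieSubalgebra.subset_lieSpan (by simp)
      have ke1 : e1 ∈ K := km1
      have ke6 : e6 ∈ K := by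
        have hb : ⁅m1, m2⁆ = e6 := by
          rw [hm2d]
          simp only [lie_add, lie_smul, h12, h16, h15]
          module
        exact hb ▸ K.lie_mem km1 km2
      have ke5 : e5 ∈ K := by
        have hb : ⁅m1, m3⁆ = e5 := by
          rw [hm3d]
          simp only [lie_sub, lie_add, lie_smul, h13, h16, h15]
          module
        exact hb ▸ K.lie_mem km1 km3
      have ke2 : e2 ∈ K := by
        have h2 : e2 = m2 - b1 • e6 - b2 • e5 := by rw [hm2d]; module
        rw [h2]
        exact sub_mem (sub_mem km2 (K.smul_mem _ ke6)) (K.smul_mem _ ke5)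
      have ke3 : e3 ∈ K := by
        have h3 : e3 = m3 + b2 • e6 - b1 • e5 := by rw [hm3d]; module
        rw [h3]
        exact sub_mem (add_mem km3 (K.smul_mem _ ke6)) (K.smul_mem _ ke5)
      have ke4 : e4 ∈ K := h23 ▸ K.lie_mem ke2 ke3
      rw [eq_top_iff, ← hspan, Submodule.span_le]
      intro x hx
      simp only [Set.mem_insert_iff, Set.mem_singleton_iff] at hx
      rcases hx with rfl|rfl|rfl|rfl|rfl|rfl <;>
        simpa using ‹_ ∈ K›
end

section
/- Let g be the 6-dimensional real Lie algebra with basis X, Y, Z, V₁, V₂, V₃ and brackets [X,Y]=Z, [Z,X]=Y, [Y,Z]=X, [X,V₁]=−V₂, [Z,V₃]=−V₂, [X,V₂]=V₁, [Y,V₃]=V₁, [Z,V₂]=V₃, [Y,V₁]=−V₃, and [X,V₃]=[Y,V₂]=[Z,V₁]=[V₁,V₂]=[V₁,V₃]=[V₂,V₃]=0, and let h = span{X, Y, Z}. For a ∈ ℝ set m_a = span{V₁ + aZ, V₂ + aY, V₃ − aX}. Then: (1) every linear subspace m of g with g = h ⊕ m as vector spaces and [h, m] ⊆ m equals m_a for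 some a ∈ ℝ; and (2) for each a ∈ ℝ, the subspace m_a satisfies g = h ⊕ m_a and [h, m_a] ⊆ m_a, and m_a generates g as a Lie algebra if and only if a ≠ 0. -/
theorem mspan3 {M : Type*} [AddCommGroup M] [Module ℝ M] (u v w x : M) :
    x ∈ Submodule.span ℝ {u, v, w} ↔ ∃ p q r : ℝ, p • u + q • v + r • w = x := by
  simp only [Submodule.mem_span_insert, Submodule.mem_span_singleton]
  constructor
  · rintro ⟨p, _, ⟨q, _, ⟨r, rfl⟩, rfl⟩, rfl⟩; exact ⟨p, q, r, by abel⟩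
  · rintro ⟨p, q, r, rfl⟩; exact ⟨p, _, ⟨q, _, ⟨r, rfl⟩, rfl⟩, by abel⟩

/-- in the 6-dimensional real Lie algebra `g ≅ so₃(ℝ) ⋉ ℝ³` with
basis `X, Y, Z, V₁, V₂, V₃` and the given structure constants, with
`h = span{X, Y, Z}` and `m_a = span{V₁ + aZ, V₂ + aY, V₃ − aX}`:
(1) every complement `m` of `h` with `[h, m] ⊆ m` equals `m_a` for some `a`;
(2) each `m_a` is such a complement, and `m_a` generates `g` as a Lie algebra
iff `a ≠ 0`. -/
theorem stmt19 (L : Type*) [LieRing L] [LieAlgebra ℝ L]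
    (X Y Z V1 V2 V3 : L)
    (hindep : LinearIndependent ℝ ![X, Y, Z, V1, V2, V3])
    (hspan : Submodule.span ℝ {X, Y, Z, V1, V2, V3} = (⊤ : Submodule ℝ L))
    (hXY : ⁅X, Y⁆ = Z) (hZX : ⁅Z, X⁆ = Y) (hYZ : ⁅Y, Z⁆ = X)
    (hXV1 : ⁅X, V1⁆ = -V2) (hZV3 : ⁅Z, V3⁆ = -V2)
    (hXV2 : ⁅X, V2⁆ = V1) (hYV3 : ⁅Y, V3⁆ = V1)
    (hZV2 : ⁅Z, V2⁆ = V3) (hYV1 : ⁅Y, V1⁆ = -V3)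
    (hXV3 : ⁅X, V3⁆ = 0) (hYV2 : ⁅Y, V2⁆ = 0) (hZV1 : ⁅Z, V1⁆ = 0)
    (hV12 : ⁅V1, V2⁆ = 0) (hV13 : ⁅V1, V3⁆ = 0) (hV23 : ⁅V2, V3⁆ = 0) :
    (∀ m : Submodule ℝ L,
      Submodule.span ℝ {X, Y, Z} ⊔ m = ⊤ →
      Submodule.span ℝ {X, Y, Z} ⊓ m = ⊥ →
      (∀ x ∈ Submodule.span ℝ {X, Y, Z}, ∀ y ∈ m, ⁅x, y⁆ ∈ m) →
      ∃ a : ℝ, m = Submodule.span ℝ {V1 + a • Z, V2 + a • Y, V3 - a • X}) ∧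
    (∀ a : ℝ,
      Submodule.span ℝ {X, Y, Z} ⊔
        Submodule.span ℝ {V1 + a • Z, V2 + a • Y, V3 - a • X} = ⊤ ∧
      Submodule.span ℝ {X, Y, Z} ⊓
        Submodule.span ℝ {V1 + a • Z, V2 + a • Y, V3 - a • X} = ⊥ ∧
      (∀ x ∈ Submodule.span ℝ {X, Y, Z},
        ∀ y ∈ Submodule.span ℝ {V1 + a • Z, V2 + a • Y, V3 - a • X},
        ⁅x, y⁆ ∈ Submodule.span ℝ {V1 + a • Z, V2 + a • Y, V3 - a • X}) ∧
      ((LieSubalgebra.lieSpan ℝ L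
        ({V1 + a • Z, V2 + a • Y, V3 - a • X} : Set L)).toSubmodule = ⊤ ↔
        a ≠ 0)) := by
  have hcoef : ∀ c1 c2 c3 c4 c5 c6 : ℝ,
      c1•X + c2•Y + c3•Z + c4•V1 + c5•V2 + c6•V3 = 0 →
      c1=0 ∧ c2=0 ∧ c3=0 ∧ c4=0 ∧ c5=0 ∧ c6=0 := by
    intro c1 c2 c3 c4 c5 c6 h
    have key := Fintype.linearIndependent_iff.mp hindep ![c1,c2,c3,c4,c5,c6] ?_
    · exact ⟨key 0, key 1, key 2, key 3, key 4, key 5⟩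
    · simpa [Fin.sum_univ_six] using h
  have sXZ : ⁅X, Z⁆ = -Y := by rw [← lie_skew, hZX]
  have sYX : ⁅Y, X⁆ = -Z := by rw [← lie_skew, hXY]
  have sZY : ⁅Z, Y⁆ = -X := by rw [← lie_skew, hYZ]
  have sV1X : ⁅V1, X⁆ = V2 := by rw [← lie_skew, hXV1, neg_neg]
  have sV1Y : ⁅V1, Y⁆ = V3 := by rw [← lie_skew, hYV1, neg_neg]
  have sV1Z : ⁅V1, Z⁆ = 0 := by rw [← lie_skew, hZV1, neg_zero]
  have sV2X : ⁅V2, X⁆ = -V1 := by rw [← lie_skew, hXV2]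
  have sV2Y : ⁅V2, Y⁆ = 0 := by rw [← lie_skew, hYV2, neg_zero]
  have sV2Z : ⁅V2, Z⁆ = -V3 := by rw [← lie_skew, hZV2]
  have sV3X : ⁅V3, X⁆ = 0 := by rw [← lie_skew, hXV3, neg_zero]
  have sV3Y : ⁅V3, Y⁆ = -V1 := by rw [← lie_skew, hYV3]
  have sV3Z : ⁅V3, Z⁆ = V2 := by rw [← lie_skew, hZV3, neg_neg]
  have sV21 : ⁅V2, V1⁆ = 0 := by rw [← lie_skew, hV12, neg_zero]
  have sV31 : ⁅V3, V1⁆ = 0 := by rw [← lie_skew, hV13, neg_zero]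
  have sV32 : ⁅V3, V2⁆ = 0 := by rw [← lie_skew, hV23, neg_zero]
  have part2 : ∀ a : ℝ,
      Submodule.span ℝ {X, Y, Z} ⊔
        Submodule.span ℝ {V1 + a • Z, V2 + a • Y, V3 - a • X} = ⊤ ∧
      Submodule.span ℝ {X, Y, Z} ⊓
        Submodule.span ℝ {V1 + a • Z, V2 + a • Y, V3 - a • X} = ⊥ ∧
      (∀ x ∈ Submodule.span ℝ {X, Y, Z},
        ∀ y ∈ Submodule.span ℝ {V1 + a • Z, V2 + a • Y, V3 - a • X},
        ⁅x, y⁆ ∈ Submodule.span ℝ {V1 + a • Z, V2 + a • Y, V3 - a • X}) ∧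
      ((LieSubalgebra.lieSpan ℝ L
        ({V1 + a • Z, V2 + a • Y, V3 - a • X} : Set L)).toSubmodule = ⊤ ↔
        a ≠ 0) := by
    intro a
    set w1 : L := V1 + a • Z with hw1
    set w2 : L := V2 + a • Y with hw2
    set w3 : L := V3 - a • X with hw3
    have bXw1 : ⁅X, w1⁆ = -w2 := by
      rw [hw1, hw2]; simp only [lie_add, lie_smul, hXV1, sXZ]; module
    have bXw2 : ⁅X, w2⁆ = w1 := by
      rw [hw1, hw2]; simp only [lie_add, lie_smul, hXV2, hXY]
    have bXw3 : ⁅X, w3⁆ = 0 := by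
      rw [hw3]; simp only [lie_sub, lie_smul, hXV3, lie_self]; module
    have bYw1 : ⁅Y, w1⁆ = -w3 := by
      rw [hw1, hw3]; simp only [lie_add, lie_smul, hYV1, hYZ]; module
    have bYw2 : ⁅Y, w2⁆ = 0 := by
      rw [hw2]; simp only [lie_add, lie_smul, hYV2, lie_self]; module
    have bYw3 : ⁅Y, w3⁆ = w1 := by
      rw [hw1, hw3]; simp only [lie_sub, lie_smul, hYV3, sYX]; module
    have bZw1 : ⁅Z, w1⁆ = 0 := by
      rw [hw1]; simp only [lie_add, lie_smul, hZV1, lie_self]; module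
    have bZw2 : ⁅Z, w2⁆ = w3 := by
      rw [hw2, hw3]; simp only [lie_add, lie_smul, hZV2, sZY]; module
    have bZw3 : ⁅Z, w3⁆ = -w2 := by
      rw [hw2, hw3]; simp only [lie_sub, lie_smul, hZV3, hZX]; module
    have hXh : X ∈ Submodule.span ℝ ({X, Y, Z} : Set L) := Submodule.subset_span (by simp)
    have hYh : Y ∈ Submodule.span ℝ ({X, Y, Z} : Set L) := Submodule.subset_span (by simp)
    have hZh : Z ∈ Submodule.span ℝ ({X, Y, Z} : Set L) := Submodule.subset_span (by simp)
    have hw1m : w1 ∈ Submodule.span ℝ ({w1, w2, w3} : Set L) := Submodule.subset_span (by simp)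
    have hw2m : w2 ∈ Submodule.span ℝ ({w1, w2, w3} : Set L) := Submodule.subset_span (by simp)
    have hw3m : w3 ∈ Submodule.span ℝ ({w1, w2, w3} : Set L) := Submodule.subset_span (by simp)
    have hsup : Submodule.span ℝ ({X, Y, Z} : Set L) ⊔ Submodule.span ℝ {w1, w2, w3} = ⊤ := by
      rw [eq_top_iff, ← hspan]
      apply Submodule.span_le.mpr
      have hX1 : X ∈ Submodule.span ℝ ({X, Y, Z} : Set L) ⊔ Submodule.span ℝ {w1, w2, w3} :=
        Submodule.mem_sup_left hXh
      have hY1 : Y ∈ Submodule.span ℝ ({X, Y, Z} : Set L) ⊔ Submodule.span ℝ {w1, w2, w3} :=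
        Submodule.mem_sup_left hYh
      have hZ1 : Z ∈ Submodule.span ℝ ({X, Y, Z} : Set L) ⊔ Submodule.span ℝ {w1, w2, w3} :=
        Submodule.mem_sup_left hZh
      have hV11 : V1 ∈ Submodule.span ℝ ({X, Y, Z} : Set L) ⊔ Submodule.span ℝ {w1, w2, w3} := by
        have hv1 : V1 = w1 - a • Z := by rw [hw1]; abel
        rw [hv1]
        exact sub_mem (Submodule.mem_sup_right hw1m) (Submodule.smul_mem _ a hZ1)
      have hV21 : V2 ∈ Submodule.span ℝ ({X, Y, Z} : Set L) ⊔ Submodule.span ℝ {w1, w2, w3} := by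
        have hv2 : V2 = w2 - a • Y := by rw [hw2]; abel
        rw [hv2]
        exact sub_mem (Submodule.mem_sup_right hw2m) (Submodule.smul_mem _ a hY1)
      have hV31 : V3 ∈ Submodule.span ℝ ({X, Y, Z} : Set L) ⊔ Submodule.span ℝ {w1, w2, w3} := by
        have hv3 : V3 = w3 + a • X := by rw [hw3]; abel
        rw [hv3]
        exact add_mem (Submodule.mem_sup_right hw3m) (Submodule.smul_mem _ a hX1)
      rintro v hv
      simp only [Set.mem_insert_iff, Set.mem_singleton_iff] at hv
      rcases hv with rfl|rfl|rfl|rfl|rfl|rfl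
      · exact hX1
      · exact hY1
      · exact hZ1
      · exact hV11
      · exact hV21
      · exact hV31
    have hinf : Submodule.span ℝ ({X, Y, Z} : Set L) ⊓ Submodule.span ℝ {w1, w2, w3} = ⊥ := by
      rw [eq_bot_iff]
      intro x hx
      rw [Submodule.mem_inf] at hx
      obtain ⟨hx1, hx2⟩ := hx
      rw [mspan3] at hx1 hx2
      obtain ⟨α, β, γ, h1⟩ := hx1
      obtain ⟨p, q, r, h2⟩ := hx2
      rw [hw1, hw2, hw3] at h2
      have h0 : (α + a*r)•X + (β - a*q)•Y + (γ - a*p)•Z + (-p)•V1 + (-q)•V2 + (-r)•V3 = 0 := by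
        linear_combination (norm := module) h1 - h2
      obtain ⟨e1,e2,e3,e4,e5,e6⟩ := hcoef _ _ _ _ _ _ h0
      have hp : p = 0 := by linarith
      have hq : q = 0 := by linarith
      have hr : r = 0 := by linarith
      have hα : α = 0 := by rw [hr] at e1; simpa using e1
      have hβ : β = 0 := by rw [hq] at e2; simpa using e2
      have hγ : γ = 0 := by rw [hp] at e3; simpa using e3
      rw [Submodule.mem_bot, ← h1, hα, hβ, hγ]; simp
    have hinv : ∀ x ∈ Submodule.span ℝ ({X, Y, Z} : Set L),
        ∀ y ∈ Submodule.span ℝ ({w1, w2, w3} : Set L),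
        ⁅x, y⁆ ∈ Submodule.span ℝ ({w1, w2, w3} : Set L) := by
      intro x hx y hy
      rw [mspan3] at hx hy ⊢
      obtain ⟨α, β, γ, rfl⟩ := hx
      obtain ⟨p, q, r, rfl⟩ := hy
      refine ⟨α*q + β*r, -(α*p) - γ*r, -(β*p) + γ*q, ?_⟩
      simp only [lie_add, add_lie, lie_smul, smul_lie, bXw1, bXw2, bXw3, bYw1, bYw2, bYw3,
        bZw1, bZw2, bZw3]
      module
    refine ⟨hsup, hinf, hinv, ?_⟩
    constructor
    · intro htop ha0
      have habs : ∀ u v : L, u ∈ Submodule.span ℝ ({V1, V2, V3} : Set L) →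
          v ∈ Submodule.span ℝ ({V1, V2, V3} : Set L) →
          ⁅u, v⁆ ∈ Submodule.span ℝ ({V1, V2, V3} : Set L) := by
        intro u v hu hv
        rw [mspan3] at hu hv
        obtain ⟨p, q, r, rfl⟩ := hu
        obtain ⟨s, t, k, rfl⟩ := hv
        have hz : ⁅p•V1 + q•V2 + r•V3, s•V1 + t•V2 + k•V3⁆ = 0 := by
          simp only [lie_add, add_lie, lie_smul, smul_lie, hV12, hV13, hV23, sV21, sV31, sV32,
            lie_self, smul_zero, add_zero, zero_add]
        rw [hz]; exact Submodule.zero_mem _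
      let A : LieSubalgebra ℝ L :=
        ⟨Submodule.span ℝ ({V1, V2, V3} : Set L), fun {u v} hu hv => habs u v hu hv⟩
      have hA : ∀ x : L, x ∈ Submodule.span ℝ ({V1, V2, V3} : Set L) → x ∈ A := fun x h => h
      have hA' : ∀ x : L, x ∈ A → x ∈ Submodule.span ℝ ({V1, V2, V3} : Set L) := fun x h => h
      have hle : LieSubalgebra.lieSpan ℝ L ({w1, w2, w3} : Set L) ≤ A := by
        apply LieSubalgebra.lieSpan_le.mpr
        rintro v hv
        simp only [Set.mem_insert_iff, Set.mem_singleton_iff] at hv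
        rcases hv with rfl|rfl|rfl
        · exact hA _ (by rw [hw1, ha0, zero_smul, add_zero]; exact Submodule.subset_span (by simp))
        · exact hA _ (by rw [hw2, ha0, zero_smul, add_zero]; exact Submodule.subset_span (by simp))
        · exact hA _ (by rw [hw3, ha0, zero_smul, sub_zero]; exact Submodule.subset_span (by simp))
      have hX' : X ∈ LieSubalgebra.lieSpan ℝ L ({w1, w2, w3} : Set L) := by
        have : X ∈ (LieSubalgebra.lieSpan ℝ L ({w1, w2, w3} : Set L)).toSubmodule := by
          rw [htop]; trivial
        exact this
      have hXA : X ∈ Submodule.span ℝ ({V1, V2, V3} : Set L) := hA' _ (hle hX')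
      rw [mspan3] at hXA
      obtain ⟨p, q, r, h⟩ := hXA
      obtain ⟨h1, -, -, -, -, -⟩ := hcoef 1 0 0 (-p) (-q) (-r)
        (by linear_combination (norm := module) -h)
      exact one_ne_zero h1
    · intro ha
      have haa : (a*a : ℝ) ≠ 0 := mul_ne_zero ha ha
      set S := LieSubalgebra.lieSpan ℝ L ({w1, w2, w3} : Set L) with hS
      have smulS : ∀ (c : ℝ) {x : L}, x ∈ S → c • x ∈ S := fun c {x} hx => S.smul_mem c hx
      have m1 : w1 ∈ S := LieSubalgebra.subset_lieSpan (by simp)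
      have m2 : w2 ∈ S := LieSubalgebra.subset_lieSpan (by simp)
      have m3 : w3 ∈ S := LieSubalgebra.subset_lieSpan (by simp)
      have e12 : ⁅w1, w2⁆ = (2*a)•w3 + (a*a)•X := by
        rw [hw1, hw2, hw3]
        simp only [lie_add, add_lie, lie_smul, smul_lie, hV12, sV1Y, hZV2, sZY]
        module
      have e13 : ⁅w1, w3⁆ = -((2*a)•w2) + (a*a)•Y := by
        rw [hw1, hw2, hw3]
        simp only [lie_sub, lie_add, add_lie, lie_smul, smul_lie, hV13, sV1X, hZV3, hZX]
        module
      have e23 : ⁅w2, w3⁆ = (2*a)•w1 - (a*a)•Z := by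
        rw [hw1, hw2, hw3]
        simp only [lie_sub, lie_add, add_lie, lie_smul, smul_lie, hV23, sV2X, hYV3, sYX]
        module
      have hXS : X ∈ S := by
        have h1 : ⁅w1, w2⁆ - (2*a)•w3 ∈ S := sub_mem (S.lie_mem m1 m2) (smulS _ m3)
        have h2 : (a*a)⁻¹ • (⁅w1, w2⁆ - (2*a)•w3) = X := by
          rw [e12, show (2*a)•w3 + (a*a)•X - (2*a)•w3 = (a*a)•X by abel, inv_smul_smul₀ haa]
        rw [← h2]; exact smulS _ h1
      have hYS : Y ∈ S := by
        have h1 : ⁅w1, w3⁆ + (2*a)•w2 ∈ S := add_mem (S.lie_mem m1 m3) (smulS _ m2)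
        have h2 : (a*a)⁻¹ • (⁅w1, w3⁆ + (2*a)•w2) = Y := by
          rw [e13, show -((2*a)•w2) + (a*a)•Y + (2*a)•w2 = (a*a)•Y by abel, inv_smul_smul₀ haa]
        rw [← h2]; exact smulS _ h1
      have hZS : Z ∈ S := by
        have h1 : (2*a)•w1 - ⁅w2, w3⁆ ∈ S := sub_mem (smulS _ m1) (S.lie_mem m2 m3)
        have h2 : (a*a)⁻¹ • ((2*a)•w1 - ⁅w2, w3⁆) = Z := by
          rw [e23, show (2*a)•w1 - ((2*a)•w1 - (a*a)•Z) = (a*a)•Z by abel, inv_smul_smul₀ haa]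
        rw [← h2]; exact smulS _ h1
      have hV1S : V1 ∈ S := by
        have hv1 : V1 = w1 - a • Z := by rw [hw1]; abel
        rw [hv1]; exact sub_mem m1 (smulS _ hZS)
      have hV2S : V2 ∈ S := by
        have hv2 : V2 = w2 - a • Y := by rw [hw2]; abel
        rw [hv2]; exact sub_mem m2 (smulS _ hYS)
      have hV3S : V3 ∈ S := by
        have hv3 : V3 = w3 + a • X := by rw [hw3]; abel
        rw [hv3]; exact add_mem m3 (smulS _ hXS)
      rw [eq_top_iff, ← hspan]
      apply Submodule.span_le.mpr
      rintro v hv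
      simp only [Set.mem_insert_iff, Set.mem_singleton_iff] at hv
      rcases hv with rfl|rfl|rfl|rfl|rfl|rfl
      · exact hXS
      · exact hYS
      · exact hZS
      · exact hV1S
      · exact hV2S
      · exact hV3S
  refine ⟨?_, part2⟩
  intro m hsupm hinfm hbrm
  have hXh : X ∈ Submodule.span ℝ ({X, Y, Z} : Set L) := Submodule.subset_span (by simp)
  have hYh : Y ∈ Submodule.span ℝ ({X, Y, Z} : Set L) := Submodule.subset_span (by simp)
  have hZh : Z ∈ Submodule.span ℝ ({X, Y, Z} : Set L) := Submodule.subset_span (by simp)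
  have hzero : ∀ u : L, u ∈ m → u ∈ Submodule.span ℝ ({X, Y, Z} : Set L) → u = 0 := by
    intro u hu hus
    have h1 : u ∈ Submodule.span ℝ ({X, Y, Z} : Set L) ⊓ m := ⟨hus, hu⟩
    rw [hinfm] at h1
    simpa using h1
  have hdec : ∀ v : L, ∃ p q r : ℝ, v + p • X + q • Y + r • Z ∈ m := by
    intro v
    have hv : v ∈ (⊤ : Submodule ℝ L) := trivial
    rw [← hsupm] at hv
    obtain ⟨u, hu, w, hw, huw⟩ := Submodule.mem_sup.mp hv
    rw [mspan3] at hu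
    obtain ⟨α, β, γ, hu'⟩ := hu
    refine ⟨-α, -β, -γ, ?_⟩
    have he : v + (-α) • X + (-β) • Y + (-γ) • Z = w := by
      rw [← huw, ← hu']; module
    rw [he]; exact hw
  obtain ⟨p1, q1, r1, hm1⟩ := hdec V1
  obtain ⟨p2, q2, r2, hm2⟩ := hdec V2
  obtain ⟨p3, q3, r3, hm3⟩ := hdec V3
  -- constraint from ⁅Z, w1⁆
  have hc1 : p1 = 0 ∧ q1 = 0 := by
    have hb : ⁅Z, V1 + p1 • X + q1 • Y + r1 • Z⁆ ∈ m := hbrm Z hZh _ hm1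
    have he : ⁅Z, V1 + p1 • X + q1 • Y + r1 • Z⁆ = (-q1) • X + p1 • Y + (0:ℝ) • Z := by
      simp only [lie_add, lie_smul, hZV1, hZX, sZY, lie_self]; module
    rw [he] at hb
    have h0 := hzero _ hb (by rw [mspan3]; exact ⟨-q1, p1, 0, rfl⟩)
    obtain ⟨e1, e2, -, -, -, -⟩ := hcoef (-q1) p1 0 0 0 0 (by linear_combination (norm := module) h0)
    exact ⟨e2, by linarith⟩
  -- constraint from ⁅Y, w2⁆
  have hc2 : p2 = 0 ∧ r2 = 0 := by
    have hb : ⁅Y, V2 + p2 • X + q2 • Y + r2 • Z⁆ ∈ m := hbrm Y hYh _ hm2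
    have he : ⁅Y, V2 + p2 • X + q2 • Y + r2 • Z⁆ = r2 • X + (0:ℝ) • Y + (-p2) • Z := by
      simp only [lie_add, lie_smul, hYV2, sYX, hYZ, lie_self]; module
    rw [he] at hb
    have h0 := hzero _ hb (by rw [mspan3]; exact ⟨r2, 0, -p2, rfl⟩)
    obtain ⟨e1, -, e3, -, -, -⟩ := hcoef r2 0 (-p2) 0 0 0 (by linear_combination (norm := module) h0)
    exact ⟨by linarith, e1⟩
  -- constraint from ⁅X, w3⁆
  have hc3 : q3 = 0 ∧ r3 = 0 := by
    have hb : ⁅X, V3 + p3 • X + q3 • Y + r3 • Z⁆ ∈ m := hbrm X hXh _ hm3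
    have he : ⁅X, V3 + p3 • X + q3 • Y + r3 • Z⁆ = (0:ℝ) • X + (-r3) • Y + q3 • Z := by
      simp only [lie_add, lie_smul, hXV3, hXY, sXZ, lie_self]; module
    rw [he] at hb
    have h0 := hzero _ hb (by rw [mspan3]; exact ⟨0, -r3, q3, rfl⟩)
    obtain ⟨-, e2, e3, -, -, -⟩ := hcoef 0 (-r3) q3 0 0 0 (by linear_combination (norm := module) h0)
    exact ⟨e3, by linarith⟩
  -- constraint from ⁅X, w1⁆ + w2
  have hc4 : q2 = r1 := by
    have hb : ⁅X, V1 + p1 • X + q1 • Y + r1 • Z⁆ + (V2 + p2 • X + q2 • Y + r2 • Z) ∈ m :=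
      add_mem (hbrm X hXh _ hm1) hm2
    have he : ⁅X, V1 + p1 • X + q1 • Y + r1 • Z⁆ + (V2 + p2 • X + q2 • Y + r2 • Z) =
        p2 • X + (q2 - r1) • Y + (r2 + q1) • Z := by
      simp only [lie_add, lie_smul, hXV1, hXY, sXZ, lie_self]; module
    rw [he] at hb
    have h0 := hzero _ hb (by rw [mspan3]; exact ⟨p2, q2 - r1, r2 + q1, rfl⟩)
    obtain ⟨-, e2, -, -, -, -⟩ := hcoef p2 (q2 - r1) (r2 + q1) 0 0 0
      (by linear_combination (norm := module) h0)
    linarith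
  -- constraint from ⁅Y, w1⁆ + w3
  have hc5 : p3 = -r1 := by
    have hb : ⁅Y, V1 + p1 • X + q1 • Y + r1 • Z⁆ + (V3 + p3 • X + q3 • Y + r3 • Z) ∈ m :=
      add_mem (hbrm Y hYh _ hm1) hm3
    have he : ⁅Y, V1 + p1 • X + q1 • Y + r1 • Z⁆ + (V3 + p3 • X + q3 • Y + r3 • Z) =
        (p3 + r1) • X + q3 • Y + (r3 - p1) • Z := by
      simp only [lie_add, lie_smul, hYV1, sYX, hYZ, lie_self]; module
    rw [he] at hb
    have h0 := hzero _ hb (by rw [mspan3]; exact ⟨p3 + r1, q3, r3 - p1, rfl⟩)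
    obtain ⟨e1, -, -, -, -, -⟩ := hcoef (p3 + r1) q3 (r3 - p1) 0 0 0
      (by linear_combination (norm := module) h0)
    linarith
  refine ⟨r1, ?_⟩
  have hg1 : V1 + r1 • Z ∈ m := by
    have he : V1 + r1 • Z = V1 + p1 • X + q1 • Y + r1 • Z := by
      rw [hc1.1, hc1.2]; module
    rw [he]; exact hm1
  have hg2 : V2 + r1 • Y ∈ m := by
    have he : V2 + r1 • Y = V2 + p2 • X + q2 • Y + r2 • Z := by
      rw [hc2.1, hc2.2, hc4]; module
    rw [he]; exact hm2
  have hg3 : V3 - r1 • X ∈ m := by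
    have he : V3 - r1 • X = V3 + p3 • X + q3 • Y + r3 • Z := by
      rw [hc3.1, hc3.2, hc5]; module
    rw [he]; exact hm3
  have hle : Submodule.span ℝ ({V1 + r1 • Z, V2 + r1 • Y, V3 - r1 • X} : Set L) ≤ m := by
    apply Submodule.span_le.mpr
    rintro v hv
    simp only [Set.mem_insert_iff, Set.mem_singleton_iff] at hv
    rcases hv with rfl|rfl|rfl
    · exact hg1
    · exact hg2
    · exact hg3
  refine le_antisymm ?_ hle
  intro x hx
  obtain ⟨hsup2, -, -, -⟩ := part2 r1
  have hxt : x ∈ (⊤ : Submodule ℝ L) := trivial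
  rw [← hsup2] at hxt
  obtain ⟨u, hu, w, hw, huw⟩ := Submodule.mem_sup.mp hxt
  have hwm : w ∈ m := hle hw
  have hum : u ∈ m := by
    have he : u = x - w := by rw [← huw]; abel
    rw [he]; exact sub_mem hx hwm
  have hu0 : u = 0 := hzero u hum hu
  rw [← huw, hu0, zero_add]
  exact hw
end
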